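/- arXiv:2408.09062 — 5 statements merged into one kernel-verified Lean document; each statement's English description precedes it below -/
import Mathlib

section
/- Let 1<p<∞ and let f = h + conj(g) be a sense-preserving harmonic mapping on 𝔻 whose dilatation w = g'/h' satisfies sup_{z∈𝔻}|w(z)| < 1 and w ∈ B_p. Then log J_f ∈ 𝔅̃_p if and only if log h' ∈ B_p, i.e. ∫_𝔻 |h''(z)/h'(z) − w'(z)·conj(w(z))/(1−|w(z)|²)|^p (1−|z|²)^{p−2} dA(z) < ∞ if and only if ∫_𝔻 |h''(z)/h'(z)|^p (1−|z|²)^{p−2} dA(z) < ∞. -/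
open MeasureTheory Metric Complex Set Filter Topology

noncomputable section

/-- The open unit disk in the complex plane. -/
def unitDisk : Set ℂ := Metric.ball 0 1

/-- The disk automorphism `φ_a(z) = (a - z)/(1 - conj a · z)`. -/
def moebius (a z : ℂ) : ℂ := (a - z) / (1 - (starRingEnd ℂ) a * z)

/-- The pre-Schwarzian derivative `h''/h'` of an analytic function. -/
def preSchwarz (h : ℂ → ℂ) (z : ℂ) : ℂ := deriv (deriv h) z / deriv h z

/-- The Schwarzian derivative `(h''/h')' - (1/2)(h''/h')²` of an analytic function. -/
def schwarz (h : ℂ → ℂ) (z : ℂ) : ℂ :=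
  deriv (preSchwarz h) z - (1 / 2) * preSchwarz h z ^ 2

/-- The (second complex) dilatation `w = g'/h'` of the harmonic map `f = h + conj g`. -/
def dil (h g : ℂ → ℂ) (z : ℂ) : ℂ := deriv g z / deriv h z

/-- `F_z = h''/h' - w'·conj(w)/(1-|w|²)` for `F = log J_f`, `f = h + conj g`. -/
def FzLogJac (h g : ℂ → ℂ) (z : ℂ) : ℂ :=
  preSchwarz h z -
    deriv (dil h g) z * (starRingEnd ℂ) (dil h g z) / ((1 - ‖dil h g z‖ ^ 2 : ℝ) : ℂ)

/-- The harmonic Schwarzian derivative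
`S_f = S_h + (conj w/(1-|w|²))(w'·h''/h' - w'') - (3/2)(w'·conj w/(1-|w|²))²`. -/
def harmSchwarz (h g : ℂ → ℂ) (z : ℂ) : ℂ :=
  schwarz h z
    + ((starRingEnd ℂ) (dil h g z) / ((1 - ‖dil h g z‖ ^ 2 : ℝ) : ℂ))
        * (deriv (dil h g) z * preSchwarz h z - deriv (deriv (dil h g)) z)
    - (3 / 2) * (deriv (dil h g) z * (starRingEnd ℂ) (dil h g z)
        / ((1 - ‖dil h g z‖ ^ 2 : ℝ) : ℂ)) ^ 2

/-- `f = h + conj g` is a sense-preserving harmonic mapping on the unit disk: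
`h, g` analytic on `𝔻` and `J_f = |h'|² - |g'|² > 0` on `𝔻`. -/
def SensePreserving (h g : ℂ → ℂ) : Prop :=
  DifferentiableOn ℂ h unitDisk ∧ DifferentiableOn ℂ g unitDisk ∧
    ∀ z ∈ unitDisk, ‖deriv g z‖ < ‖deriv h z‖

/-- `f` is uniformly locally univalent on the unit disk: injective on every
pseudo-hyperbolic disk of some fixed radius `r < 1`. -/
def UnifLocUnivalent (f : ℂ → ℂ) : Prop :=
  ∃ r : ℝ, 0 < r ∧ r < 1 ∧ ∀ a ∈ unitDisk,
    Set.InjOn f {z | z ∈ unitDisk ∧ ‖(z - a) / (1 - (starRingEnd ℂ) a * z)‖ < r}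

/-- The Wirtinger derivative `F_z = (1/2)(∂ₓF - i ∂_yF)` of a real-differentiable map. -/
def wirtZ (F : ℂ → ℂ) (z : ℂ) : ℂ :=
  (1 / 2) * (fderiv ℝ F z 1 - Complex.I * fderiv ℝ F z Complex.I)

/-- The Wirtinger derivative `F_{z̄} = (1/2)(∂ₓF + i ∂_yF)` of a real-differentiable map. -/
def wirtZbar (F : ℂ → ℂ) (z : ℂ) : ℂ :=
  (1 / 2) * (fderiv ℝ F z 1 + Complex.I * fderiv ℝ F z Complex.I)

/-- The Jacobian `J_F = |F_z|² - |F_{z̄}|²` of a smooth map `F : 𝔻 → ℂ`. -/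
def jac (F : ℂ → ℂ) (z : ℂ) : ℝ := ‖wirtZ F z‖ ^ 2 - ‖wirtZbar F z‖ ^ 2

/-- `σ` is a holomorphic automorphism of the unit disk. -/
def DiskAut (σ : ℂ → ℂ) : Prop :=
  DifferentiableOn ℂ σ unitDisk ∧ Set.BijOn σ unitDisk unitDisk

/-- The function `h(z) = 2(1-z)^{-1/2}` (principal branch). -/
def hfun (w : ℂ) : ℂ := 2 * (1 - w) ^ (-(1 / 2) : ℂ)


lemma besov_key (p : ℝ) (hp : 0 < p) (C : ℝ) (hC : 0 ≤ C) (A B u : ℂ → ℂ)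
    (hBm : Measurable B)
    (hAB : ∀ z ∈ unitDisk, ‖A z‖ ≤ ‖B z‖ + C * ‖u z‖)
    (hB : ∫⁻ z in unitDisk, ENNReal.ofReal (‖B z‖ ^ p * (1 - ‖z‖ ^ 2) ^ (p - 2)) < ⊤)
    (hu : ∫⁻ z in unitDisk, ENNReal.ofReal (‖u z‖ ^ p * (1 - ‖z‖ ^ 2) ^ (p - 2)) < ⊤) :
    ∫⁻ z in unitDisk, ENNReal.ofReal (‖A z‖ ^ p * (1 - ‖z‖ ^ 2) ^ (p - 2)) < ⊤ := by
  set c1 : ENNReal := ENNReal.ofReal ((2 : ℝ) ^ p) with hc1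
  set c2 : ENNReal := ENNReal.ofReal ((2 : ℝ) ^ p * C ^ p) with hc2
  set f1 : ℂ → ENNReal := fun z => ENNReal.ofReal (‖B z‖ ^ p * (1 - ‖z‖ ^ 2) ^ (p - 2)) with hf1
  set f2 : ℂ → ENNReal := fun z => ENNReal.ofReal (‖u z‖ ^ p * (1 - ‖z‖ ^ 2) ^ (p - 2)) with hf2
  have hmf1 : Measurable f1 := by
    apply ENNReal.measurable_ofReal.comp
    exact (hBm.norm.pow measurable_const).mul
      ((measurable_const.sub (measurable_norm.pow measurable_const)).pow measurable_const)
  have key : ∫⁻ z in unitDisk, ENNReal.ofReal (‖A z‖ ^ p * (1 - ‖z‖ ^ 2) ^ (p - 2))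
      ≤ ∫⁻ z in unitDisk, (c1 * f1 z + c2 * f2 z) := by
    apply setLIntegral_mono' measurableSet_ball
    intro z hz
    have hz1 : ‖z‖ < 1 := mem_ball_zero_iff.mp hz
    have hw : (0:ℝ) < 1 - ‖z‖ ^ 2 := by nlinarith [norm_nonneg z]
    have hw' : (0:ℝ) ≤ (1 - ‖z‖ ^ 2) ^ (p - 2) := Real.rpow_nonneg hw.le _
    set a := ‖B z‖
    set b := C * ‖u z‖
    have ha : 0 ≤ a := norm_nonneg _
    have hb : 0 ≤ b := mul_nonneg hC (norm_nonneg _)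
    have h1 : ‖A z‖ ^ p ≤ (a + b) ^ p :=
      Real.rpow_le_rpow (norm_nonneg _) (hAB z hz) hp.le
    have h2 : (a + b) ^ p ≤ (2:ℝ) ^ p * (a ^ p + b ^ p) := by
      calc (a + b) ^ p ≤ (2 * max a b) ^ p := by
            apply Real.rpow_le_rpow (by positivity) _ hp.le
            rw [two_mul]
            exact add_le_add (le_max_left a b) (le_max_right a b)
        _ = (2:ℝ) ^ p * (max a b) ^ p := Real.mul_rpow (by norm_num) (le_max_of_le_left ha)
        _ ≤ (2:ℝ) ^ p * (a ^ p + b ^ p) := by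
            apply mul_le_mul_of_nonneg_left _ (Real.rpow_nonneg (by norm_num) _)
            rcases max_cases a b with ⟨hm, _⟩ | ⟨hm, _⟩ <;> rw [hm]
            · exact le_add_of_nonneg_right (Real.rpow_nonneg hb _)
            · exact le_add_of_nonneg_left (Real.rpow_nonneg ha _)
    have h3 : b ^ p = C ^ p * ‖u z‖ ^ p := Real.mul_rpow hC (norm_nonneg _)
    have h4 : ‖A z‖ ^ p * (1 - ‖z‖ ^ 2) ^ (p - 2)
        ≤ (2:ℝ) ^ p * (a ^ p * (1 - ‖z‖ ^ 2) ^ (p - 2))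
          + ((2:ℝ) ^ p * C ^ p) * (‖u z‖ ^ p * (1 - ‖z‖ ^ 2) ^ (p - 2)) := by
      have := mul_le_mul_of_nonneg_right (h1.trans h2) hw'
      calc ‖A z‖ ^ p * (1 - ‖z‖ ^ 2) ^ (p - 2)
          ≤ (2:ℝ) ^ p * (a ^ p + b ^ p) * (1 - ‖z‖ ^ 2) ^ (p - 2) := this
        _ = (2:ℝ) ^ p * (a ^ p * (1 - ‖z‖ ^ 2) ^ (p - 2))
            + ((2:ℝ) ^ p * C ^ p) * (‖u z‖ ^ p * (1 - ‖z‖ ^ 2) ^ (p - 2)) := by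
            rw [h3]; ring
    calc ENNReal.ofReal (‖A z‖ ^ p * (1 - ‖z‖ ^ 2) ^ (p - 2))
        ≤ ENNReal.ofReal ((2:ℝ) ^ p * (a ^ p * (1 - ‖z‖ ^ 2) ^ (p - 2))
            + ((2:ℝ) ^ p * C ^ p) * (‖u z‖ ^ p * (1 - ‖z‖ ^ 2) ^ (p - 2))) :=
          ENNReal.ofReal_le_ofReal h4
      _ = c1 * f1 z + c2 * f2 z := by
          rw [ENNReal.ofReal_add (by positivity) (by positivity)]
          congr 1
          · exact ENNReal.ofReal_mul (by positivity)
          · exact ENNReal.ofReal_mul (by positivity)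
  have split : ∫⁻ z in unitDisk, (c1 * f1 z + c2 * f2 z)
      = (∫⁻ z in unitDisk, c1 * f1 z) + ∫⁻ z in unitDisk, c2 * f2 z :=
    lintegral_add_left (hmf1.const_mul c1) _
  have e1 : ∫⁻ z in unitDisk, c1 * f1 z = c1 * ∫⁻ z in unitDisk, f1 z :=
    lintegral_const_mul' c1 f1 ENNReal.ofReal_ne_top
  have e2 : ∫⁻ z in unitDisk, c2 * f2 z = c2 * ∫⁻ z in unitDisk, f2 z :=
    lintegral_const_mul' c2 f2 ENNReal.ofReal_ne_top
  refine lt_of_le_of_lt (key.trans_eq (by rw [split, e1, e2])) ?_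
  exact ENNReal.add_lt_top.mpr
    ⟨ENNReal.mul_lt_top ENNReal.ofReal_lt_top hB, ENNReal.mul_lt_top ENNReal.ofReal_lt_top hu⟩

lemma dil_measurable (h g : ℂ → ℂ) : Measurable (dil h g) :=
  (measurable_deriv g).div (measurable_deriv h)

lemma preSchwarz_measurable (h : ℂ → ℂ) : Measurable (preSchwarz h) :=
  (measurable_deriv _).div (measurable_deriv h)

/-- For a sense-preserving harmonic map with `‖w‖_∞ < 1` and `w ∈ B_p`,
`log J_f ∈ 𝔅̃_p` if and only if `log h' ∈ B_p`. -/
theorem logJac_besov_iff_logDeriv_besov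
    (p : ℝ) (hp : 1 < p) (h g : ℂ → ℂ)
    (hsp : SensePreserving h g)
    (hwb : ∃ k : ℝ, k < 1 ∧ ∀ z ∈ unitDisk, ‖dil h g z‖ ≤ k)
    (hwBp : ∫⁻ z in unitDisk,
        ENNReal.ofReal (‖deriv (dil h g) z‖ ^ p * (1 - ‖z‖ ^ 2) ^ (p - 2)) < ⊤) :
    (∫⁻ z in unitDisk, ENNReal.ofReal
        (‖FzLogJac h g z‖ ^ p * (1 - ‖z‖ ^ 2) ^ (p - 2)) < ⊤)
      ↔ (∫⁻ z in unitDisk, ENNReal.ofReal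
          (‖preSchwarz h z‖ ^ p * (1 - ‖z‖ ^ 2) ^ (p - 2)) < ⊤) := by
  obtain ⟨k, hk1, hk⟩ := hwb
  have hp0 : (0:ℝ) < p := lt_trans zero_lt_one hp
  set k' : ℝ := max k 0 with hk'def
  have hk'0 : (0:ℝ) ≤ k' := le_max_right _ _
  have hk'1 : k' < 1 := max_lt hk1 one_pos
  have hkk : ∀ z ∈ unitDisk, ‖dil h g z‖ ≤ k' := fun z hz => (hk z hz).trans (le_max_left _ _)
  have hden : (0:ℝ) < 1 - k' ^ 2 := by nlinarith
  set C : ℝ := k' / (1 - k' ^ 2) with hCdef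
  have hC : 0 ≤ C := div_nonneg hk'0 hden.le
  set T : ℂ → ℂ := fun z =>
    deriv (dil h g) z * (starRingEnd ℂ) (dil h g z) / ((1 - ‖dil h g z‖ ^ 2 : ℝ) : ℂ) with hTdef
  have hT : ∀ z ∈ unitDisk, ‖T z‖ ≤ C * ‖deriv (dil h g) z‖ := by
    intro z hz
    have hwk := hkk z hz
    have hd2 : (0:ℝ) < 1 - ‖dil h g z‖ ^ 2 := by nlinarith [norm_nonneg (dil h g z)]
    have hTn : ‖T z‖ = ‖deriv (dil h g) z‖ * ‖dil h g z‖ / (1 - ‖dil h g z‖ ^ 2) := by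
      rw [hTdef]
      simp only [norm_div, norm_mul, RCLike.norm_conj, Complex.norm_real]
      rw [Real.norm_of_nonneg hd2.le]
    rw [hTn, mul_comm (C : ℝ), mul_div_assoc]
    apply mul_le_mul_of_nonneg_left _ (norm_nonneg _)
    rw [hCdef]
    exact div_le_div₀ hk'0 hwk hden (by nlinarith [norm_nonneg (dil h g z)])
  have mT : Measurable T := by
    apply Measurable.div
    · exact (measurable_deriv (dil h g)).mul (RCLike.continuous_conj.measurable.comp (dil_measurable h g))
    · exact Complex.measurable_ofReal.comp
        (measurable_const.sub (((dil_measurable h g).norm).pow measurable_const))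
  have mF : Measurable (FzLogJac h g) := by
    have hFe : FzLogJac h g = fun z => preSchwarz h z - T z := rfl
    rw [hFe]
    exact (preSchwarz_measurable h).sub mT
  have hEq : ∀ z, preSchwarz h z = FzLogJac h g z + T z := by
    intro z
    simp only [FzLogJac, hTdef, sub_add_cancel]
  constructor
  · intro hF
    refine besov_key p hp0 C hC _ _ _ mF ?_ hF hwBp
    intro z hz
    rw [hEq z]
    exact (norm_add_le _ _).trans (add_le_add le_rfl (hT z hz))
  · intro hH
    refine besov_key p hp0 C hC _ _ _ (preSchwarz_measurable h) ?_ hH hwBp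
    intro z hz
    have hFe : FzLogJac h g z = preSchwarz h z - T z := rfl
    rw [hFe]
    exact (norm_sub_le _ _).trans (add_le_add le_rfl (hT z hz))
end
end

section
/- Let f = h + conj(g) be a sense-preserving harmonic mapping on 𝔻 whose dilatation w = g'/h' satisfies ‖w‖ := sup_{z∈𝔻}|w(z)| < 1, and suppose β₂(f) := sup_{z∈𝔻} (1−|z|²) √(J_f(z)) < ∞ (i.e. f ∈ 𝔅𝒯). Then for all z₁, z₂ ∈ 𝔻, |f(z₁) − f(z₂)| ≤ ((1+‖w‖)/(1−‖w‖))^{1/2} · β₂(f) · d_h(z₁, z₂), where d_h is the hyperbolic distance on 𝔻. -/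
open MeasureTheory Metric Complex Set Filter Topology

noncomputable section

private lemma normSq_moeb (a b : ℂ) :
    Complex.normSq (1 - (starRingEnd ℂ) b * a) - Complex.normSq (a - b)
      = (1 - Complex.normSq a) * (1 - Complex.normSq b) := by
  simp only [Complex.normSq_apply, Complex.sub_re, Complex.sub_im, Complex.mul_re,
    Complex.mul_im, Complex.one_re, Complex.one_im, Complex.conj_re, Complex.conj_im]
  ring

private lemma normSq_phi (z₂ u : ℂ) (t : ℝ) (hu : Complex.normSq u = 1) :
    Complex.normSq (1 + ((starRingEnd ℂ) z₂ * u) * t) - Complex.normSq (z₂ + t * u)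
      = (1 - Complex.normSq z₂) * (1 - t ^ 2) := by
  simp only [Complex.normSq_apply] at hu ⊢
  simp only [Complex.add_re, Complex.add_im, Complex.mul_re, Complex.mul_im,
    Complex.one_re, Complex.one_im, Complex.conj_re, Complex.conj_im,
    Complex.ofReal_re, Complex.ofReal_im]
  linear_combination (z₂.re * z₂.re + z₂.im * z₂.im - 1) * t ^ 2 * hu

private lemma sum_le_aux {A B k β s : ℝ} (hB0 : 0 ≤ B) (hBA : B < A) (hBk : B ≤ k * A)
    (hk1 : k < 1) (hs : 0 < s)
    (hβ : s * Real.sqrt (A ^ 2 - B ^ 2) ≤ β) :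
    (A + B) * s ≤ Real.sqrt ((1 + k) / (1 - k)) * β := by
  have hA0 : 0 < A := lt_of_le_of_lt hB0 hBA
  have hk0 : 0 ≤ k := by
    rcases le_or_gt 0 k with h | h
    · exact h
    · nlinarith
  have h1 : (A + B) ^ 2 ≤ (1 + k) / (1 - k) * (A ^ 2 - B ^ 2) := by
    rw [div_mul_eq_mul_div, le_div_iff₀ (by linarith)]
    nlinarith
  have h2 : A + B ≤ Real.sqrt ((1 + k) / (1 - k)) * Real.sqrt (A ^ 2 - B ^ 2) := by
    rw [← Real.sqrt_mul (div_nonneg (by linarith) (by linarith))]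
    calc A + B = Real.sqrt ((A + B) ^ 2) := (Real.sqrt_sq (by linarith)).symm
      _ ≤ _ := Real.sqrt_le_sqrt h1
  calc (A + B) * s ≤ (Real.sqrt ((1 + k) / (1 - k)) * Real.sqrt (A ^ 2 - B ^ 2)) * s :=
        mul_le_mul_of_nonneg_right h2 hs.le
    _ = Real.sqrt ((1 + k) / (1 - k)) * (s * Real.sqrt (A ^ 2 - B ^ 2)) := by ring
    _ ≤ _ := mul_le_mul_of_nonneg_left hβ (Real.sqrt_nonneg _)


set_option maxHeartbeats 1000000 in
/-- If `f = h + conj g ∈ 𝔅𝒯` is sense-preserving harmonic with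
`‖w‖_∞ < 1`, then `|f(z₁) - f(z₂)| ≤ ((1+‖w‖)/(1-‖w‖))^{1/2} β₂(f) d_h(z₁,z₂)`. -/
theorem blochType_lipschitz_hyperbolic
    (h g : ℂ → ℂ) (hsp : SensePreserving h g)
    (hbw : BddAbove (Set.range fun z : unitDisk => ‖dil h g (z : ℂ)‖))
    (hwlt : (⨆ z : unitDisk, ‖dil h g (z : ℂ)‖) < 1)
    (hbβ : BddAbove (Set.range fun z : unitDisk =>
      (1 - ‖(z : ℂ)‖ ^ 2) * Real.sqrt (‖deriv h (z : ℂ)‖ ^ 2 - ‖deriv g (z : ℂ)‖ ^ 2))) :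
    ∀ z₁ ∈ unitDisk, ∀ z₂ ∈ unitDisk,
      ‖(h z₁ + (starRingEnd ℂ) (g z₁)) - (h z₂ + (starRingEnd ℂ) (g z₂))‖ ≤
        Real.sqrt ((1 + ⨆ z : unitDisk, ‖dil h g (z : ℂ)‖)
            / (1 - ⨆ z : unitDisk, ‖dil h g (z : ℂ)‖))
          * (⨆ z : unitDisk,
              (1 - ‖(z : ℂ)‖ ^ 2) * Real.sqrt (‖deriv h (z : ℂ)‖ ^ 2 - ‖deriv g (z : ℂ)‖ ^ 2))
          * ((1 / 2) * Real.log
              ((1 + ‖(z₁ - z₂) / (1 - (starRingEnd ℂ) z₂ * z₁)‖)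
                / (1 - ‖(z₁ - z₂) / (1 - (starRingEnd ℂ) z₂ * z₁)‖))) := by
  obtain ⟨hdh, hdg, hJ⟩ := hsp
  intro z₁ hz₁ z₂ hz₂
  set k : ℝ := ⨆ z : unitDisk, ‖dil h g (z : ℂ)‖ with hkdef
  set β : ℝ := ⨆ z : unitDisk,
      (1 - ‖(z : ℂ)‖ ^ 2) * Real.sqrt (‖deriv h (z : ℂ)‖ ^ 2 - ‖deriv g (z : ℂ)‖ ^ 2) with hβdef
  set C : ℝ := Real.sqrt ((1 + k) / (1 - k)) * β with hCdef
  have hopen : IsOpen unitDisk := Metric.isOpen_ball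
  have hz₁n : ‖z₁‖ < 1 := by simpa [unitDisk, Metric.mem_ball, dist_zero_right] using hz₁
  have hz₂n : ‖z₂‖ < 1 := by simpa [unitDisk, Metric.mem_ball, dist_zero_right] using hz₂
  have h0mem : (0 : ℂ) ∈ unitDisk := by simp [unitDisk]
  have hβ0 : 0 ≤ β := le_trans
    (mul_nonneg (by norm_num) (Real.sqrt_nonneg _)) (le_ciSup hbβ ⟨0, h0mem⟩)
  -- key pointwise estimate
  have hpoint : ∀ z ∈ unitDisk,
      (‖deriv h z‖ + ‖deriv g z‖) * (1 - ‖z‖ ^ 2) ≤ C := by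
    intro z hz
    have hzn : ‖z‖ < 1 := by simpa [unitDisk, Metric.mem_ball, dist_zero_right] using hz
    have hBA : ‖deriv g z‖ < ‖deriv h z‖ := hJ z hz
    have hA0 : 0 < ‖deriv h z‖ := lt_of_le_of_lt (norm_nonneg _) hBA
    have hkle : ‖dil h g z‖ ≤ k := le_ciSup hbw ⟨z, hz⟩
    have hBk : ‖deriv g z‖ ≤ k * ‖deriv h z‖ := by
      have h5 : ‖deriv g z‖ / ‖deriv h z‖ ≤ k := by
        simpa [dil, norm_div] using hkle
      exact (div_le_iff₀ hA0).mp h5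
    exact sum_le_aux (norm_nonneg _) hBA hBk hwlt (by nlinarith [norm_nonneg z])
      (le_ciSup hbβ ⟨z, hz⟩)
  -- trivial case
  by_cases hzz : z₁ = z₂
  · subst hzz
    simp
  -- setup
  set d : ℂ := 1 - (starRingEnd ℂ) z₂ * z₁ with hddef
  have hd0 : d ≠ 0 := by
    intro hcon
    rw [hddef, sub_eq_zero] at hcon
    have h1 : ‖(starRingEnd ℂ) z₂ * z₁‖ < 1 := by
      rw [norm_mul, RCLike.norm_conj]
      nlinarith [norm_nonneg z₁, norm_nonneg z₂]
    rw [← hcon] at h1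
    simp at h1
  set m : ℂ := (z₁ - z₂) / d with hmdef
  have hm0 : m ≠ 0 := div_ne_zero (sub_ne_zero.mpr hzz) hd0
  set ρ : ℝ := ‖m‖ with hρdef
  have hρpos : 0 < ρ := norm_pos_iff.mpr hm0
  have hρ1 : ρ < 1 := by
    have key : Complex.normSq d - Complex.normSq (z₁ - z₂)
        = (1 - Complex.normSq z₁) * (1 - Complex.normSq z₂) := normSq_moeb z₁ z₂
    have h1 : Complex.normSq z₁ < 1 := by
      rw [Complex.normSq_eq_norm_sq]; nlinarith [norm_nonneg z₁]
    have h2 : Complex.normSq z₂ < 1 := by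
      rw [Complex.normSq_eq_norm_sq]; nlinarith [norm_nonneg z₂]
    have h3 : Complex.normSq (z₁ - z₂) < Complex.normSq d := by nlinarith
    have h4 : ‖z₁ - z₂‖ < ‖d‖ := by
      have h6 := Real.sqrt_lt_sqrt (Complex.normSq_nonneg _) h3
      simpa [Complex.norm_def] using h6
    rw [hρdef, hmdef, norm_div, div_lt_one (lt_of_le_of_lt (norm_nonneg _) h4)]
    exact h4
  set u : ℂ := m / (ρ : ℂ) with hudef
  have hρC : ((ρ : ℝ) : ℂ) ≠ 0 := Complex.ofReal_ne_zero.mpr hρpos.ne'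
  have hun : ‖u‖ = 1 := by
    rw [hudef, norm_div, Complex.norm_real, Real.norm_eq_abs, _root_.abs_of_pos hρpos,
      hρdef, div_self hρpos.ne']
  have hunsq : Complex.normSq u = 1 := by
    rw [Complex.normSq_eq_norm_sq, hun]; norm_num
  set c : ℂ := (starRingEnd ℂ) z₂ * u with hcdef
  set φ : ℝ → ℂ := fun t => (z₂ + t * u) / (1 + c * t) with hφdef
  -- denominator bounds
  have hdenlt : ∀ t : ℝ, t ∈ Icc 0 ρ → ‖c * (t : ℂ)‖ < 1 := by
    intro t ht
    rw [hcdef, norm_mul, norm_mul, RCLike.norm_conj, hun, mul_one, Complex.norm_real,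
      Real.norm_eq_abs, _root_.abs_of_nonneg ht.1]
    nlinarith [ht.2, norm_nonneg z₂]
  have hden : ∀ t : ℝ, t ∈ Icc 0 ρ → 1 + c * (t : ℂ) ≠ 0 := by
    intro t ht hcon
    have h2 : c * (t : ℂ) = -1 := by linear_combination hcon
    have h3 := hdenlt t ht
    rw [h2] at h3
    simp at h3
  -- key disk identity
  have hkey : ∀ t : ℝ, t ∈ Icc 0 ρ →
      1 - ‖φ t‖ ^ 2 = (1 - ‖z₂‖ ^ 2) * (1 - t ^ 2) / ‖1 + c * (t : ℂ)‖ ^ 2 := by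
    intro t ht
    have hD : (0 : ℝ) < ‖1 + c * (t : ℂ)‖ ^ 2 :=
      pow_pos (norm_pos_iff.mpr (hden t ht)) 2
    have hnum : ‖1 + c * (t : ℂ)‖ ^ 2 - ‖z₂ + (t : ℂ) * u‖ ^ 2
        = (1 - ‖z₂‖ ^ 2) * (1 - t ^ 2) := by
      have h5 := normSq_phi z₂ u t hunsq
      have e1 : ‖1 + c * (t : ℂ)‖ ^ 2 = Complex.normSq (1 + ((starRingEnd ℂ) z₂ * u) * t) := by
        rw [hcdef, Complex.sq_norm]
      have e2 : ‖z₂ + (t : ℂ) * u‖ ^ 2 = Complex.normSq (z₂ + t * u) := by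
        rw [Complex.sq_norm]
      have e3 : Complex.normSq z₂ = ‖z₂‖ ^ 2 := by
        rw [Complex.sq_norm]
      rw [e1, e2, h5, e3]
    have hDne : ‖1 + c * (t : ℂ)‖ ≠ 0 := by
      simpa using norm_ne_zero_iff.mpr (hden t ht)
    simp only [hφdef]
    rw [norm_div, div_pow, ← hnum]
    rw [sub_div, div_self hD.ne']
  have hmem : ∀ t : ℝ, t ∈ Icc 0 ρ → φ t ∈ unitDisk := by
    intro t ht
    have h1 := hkey t ht
    have hD : (0 : ℝ) < ‖1 + c * (t : ℂ)‖ ^ 2 :=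
      pow_pos (norm_pos_iff.mpr (hden t ht)) 2
    have ht1 : t < 1 := lt_of_le_of_lt ht.2 hρ1
    have h2 : 0 < 1 - ‖φ t‖ ^ 2 := by
      rw [h1]
      have h7 : 0 < (1 - ‖z₂‖ ^ 2) * (1 - t ^ 2) :=
        mul_pos (by nlinarith [norm_nonneg z₂]) (by nlinarith [ht.1])
      exact div_pos h7 hD
    have h8 : ‖φ t‖ < 1 := by nlinarith [norm_nonneg (φ t)]
    simpa [unitDisk, Metric.mem_ball, dist_zero_right] using h8
  -- derivative of φ
  set φd : ℝ → ℂ := fun t => u * (1 - (Complex.normSq z₂ : ℂ)) / (1 + c * t) ^ 2 with hφddef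
  have hφ' : ∀ t : ℝ, t ∈ Icc 0 ρ → HasDerivAt φ (φd t) t := by
    intro t ht
    have hnum : HasDerivAt (fun s : ℂ => z₂ + s * u) u (t : ℂ) := by
      simpa using ((hasDerivAt_id (t : ℂ)).mul_const u).const_add z₂
    have hde : HasDerivAt (fun s : ℂ => 1 + c * s) c (t : ℂ) := by
      simpa using ((hasDerivAt_id (t : ℂ)).const_mul c).const_add 1
    have hdiv := hnum.div hde (hden t ht)
    have hcomp := hdiv.comp_ofReal
    convert hcomp using 1
    · rfl
    simp only [hφddef]
    congr 1
    rw [hcdef]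
    linear_combination u * Complex.mul_conj z₂
  -- norm of φd
  have hφdnorm : ∀ t : ℝ, t ∈ Icc 0 ρ →
      ‖φd t‖ * (1 - t ^ 2) = 1 - ‖φ t‖ ^ 2 := by
    intro t ht
    have hD : (0 : ℝ) < ‖1 + c * (t : ℂ)‖ ^ 2 :=
      pow_pos (norm_pos_iff.mpr (hden t ht)) 2
    have h2 : Complex.normSq z₂ ≤ 1 := by
      rw [Complex.normSq_eq_norm_sq]; nlinarith [norm_nonneg z₂]
    have h1 : ‖φd t‖ = (1 - ‖z₂‖ ^ 2) / ‖1 + c * (t : ℂ)‖ ^ 2 := by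
      simp only [hφddef]
      rw [norm_div, norm_mul, hun, one_mul, norm_pow]
      congr 1
      calc ‖(1 : ℂ) - (Complex.normSq z₂ : ℂ)‖
          = ‖((1 - Complex.normSq z₂ : ℝ) : ℂ)‖ := by norm_cast
        _ = |1 - Complex.normSq z₂| := by rw [Complex.norm_real, Real.norm_eq_abs]
        _ = 1 - Complex.normSq z₂ := _root_.abs_of_nonneg (by linarith)
        _ = 1 - ‖z₂‖ ^ 2 := by rw [← Complex.sq_norm]
    rw [h1, hkey t ht]
    ring
  -- φ at endpoints
  have hφ0 : φ 0 = z₂ := by simp [hφdef]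
  have hφρ : φ ρ = z₁ := by
    have h1 : ((ρ : ℝ) : ℂ) * u = m := by
      rw [hudef]; field_simp
    have h2 : 1 + c * (ρ : ℂ) ≠ 0 := hden ρ ⟨hρpos.le, le_refl _⟩
    have h3 : c * (ρ : ℂ) = (starRingEnd ℂ) z₂ * m := by
      rw [hcdef, mul_assoc, mul_comm u ((ρ : ℝ) : ℂ), h1]
    have hm4 : m * d = z₁ - z₂ := by
      rw [hmdef]; field_simp
    have h4 : z₂ + m = z₁ * (1 + (starRingEnd ℂ) z₂ * m) := by
      apply mul_right_cancel₀ hd0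
      linear_combination (1 - z₁ * (starRingEnd ℂ) z₂) * hm4 + (z₂ - z₁) * hddef
    simp only [hφdef]
    rw [div_eq_iff h2, h1, h3]
    exact h4
  -- the function F and its derivative
  set F : ℝ → ℂ := fun t => h (φ t) + (starRingEnd ℂ) (g (φ t)) with hFdef
  set F' : ℝ → ℂ := fun t => φd t * deriv h (φ t) + (starRingEnd ℂ) (φd t * deriv g (φ t))
    with hF'def
  have hF' : ∀ t : ℝ, t ∈ Icc 0 ρ → HasDerivAt F (F' t) t := by
    intro t ht
    have hmemt := hmem t ht
    have hh : HasDerivAt h (deriv h (φ t)) (φ t) :=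
      (hdh.differentiableAt (hopen.mem_nhds hmemt)).hasDerivAt
    have hg' : HasDerivAt g (deriv g (φ t)) (φ t) :=
      (hdg.differentiableAt (hopen.mem_nhds hmemt)).hasDerivAt
    have h1 : HasDerivAt (fun t => h (φ t)) (φd t * deriv h (φ t)) t := by
      have h9 := hh.scomp t (hφ' t ht)
      exact h9
    have h2 : HasDerivAt (fun t => g (φ t)) (φd t * deriv g (φ t)) t := by
      have h9 := hg'.scomp t (hφ' t ht)
      exact h9
    have h3 : HasDerivAt (fun t => (starRingEnd ℂ) (g (φ t)))
        ((starRingEnd ℂ) (φd t * deriv g (φ t))) t := by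
      exact h2.star
    exact h1.add h3
  -- derivative bound
  have hbound : ∀ t : ℝ, t ∈ Ico 0 ρ → ‖F' t‖ ≤ C * (2⁻¹ * (1 / (1 + t) - -1 / (1 - t))) := by
    intro t ht
    have ht' : t ∈ Icc 0 ρ := ⟨ht.1, ht.2.le⟩
    have ht1 : t < 1 := lt_of_lt_of_le ht.2 hρ1.le
    have hmemt := hmem t ht'
    have h1 : ‖F' t‖ ≤ (‖deriv h (φ t)‖ + ‖deriv g (φ t)‖) * ‖φd t‖ := by
      simp only [hF'def]
      calc ‖φd t * deriv h (φ t) + (starRingEnd ℂ) (φd t * deriv g (φ t))‖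
          ≤ ‖φd t * deriv h (φ t)‖ + ‖(starRingEnd ℂ) (φd t * deriv g (φ t))‖ := norm_add_le _ _
        _ = (‖deriv h (φ t)‖ + ‖deriv g (φ t)‖) * ‖φd t‖ := by
            rw [RCLike.norm_conj, norm_mul, norm_mul]; ring
    have h2 : (‖deriv h (φ t)‖ + ‖deriv g (φ t)‖) * ‖φd t‖ * (1 - t ^ 2) ≤ C := by
      calc (‖deriv h (φ t)‖ + ‖deriv g (φ t)‖) * ‖φd t‖ * (1 - t ^ 2)
          = (‖deriv h (φ t)‖ + ‖deriv g (φ t)‖) * (‖φd t‖ * (1 - t ^ 2)) := by ring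
        _ = (‖deriv h (φ t)‖ + ‖deriv g (φ t)‖) * (1 - ‖φ t‖ ^ 2) := by
            rw [hφdnorm t ht']
        _ ≤ C := hpoint (φ t) hmemt
    have ht2 : (0 : ℝ) < 1 - t ^ 2 := by nlinarith [ht.1]
    have h3 : ‖F' t‖ ≤ C / (1 - t ^ 2) := by
      rw [le_div_iff₀ ht2]
      calc ‖F' t‖ * (1 - t ^ 2)
          ≤ (‖deriv h (φ t)‖ + ‖deriv g (φ t)‖) * ‖φd t‖ * (1 - t ^ 2) :=
            mul_le_mul_of_nonneg_right h1 ht2.le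
        _ ≤ C := h2
    calc ‖F' t‖ ≤ C / (1 - t ^ 2) := h3
      _ = C * (2⁻¹ * (1 / (1 + t) - -1 / (1 - t))) := by
          have h4 : (1 : ℝ) + t ≠ 0 := by nlinarith [ht.1]
          have h5 : (1 : ℝ) - t ≠ 0 := by nlinarith
          field_simp
          ring
  -- boundary function
  set Bf : ℝ → ℝ := fun t => C * (2⁻¹ * (Real.log (1 + t) - Real.log (1 - t))) with hBfdef
  set Bf' : ℝ → ℝ := fun t => C * (2⁻¹ * (1 / (1 + t) - -1 / (1 - t))) with hBf'def
  have hBd : ∀ t : ℝ, t ∈ Icc 0 ρ → HasDerivAt Bf (Bf' t) t := by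
    intro t ht
    have ht1 : t < 1 := lt_of_le_of_lt ht.2 hρ1
    have h1 : HasDerivAt (fun t : ℝ => Real.log (1 + t)) (1 / (1 + t)) t := by
      have h9 := (((hasDerivAt_id t).const_add 1).log (by intro hc; simp at hc; nlinarith [ht.1]))
      simpa using h9
    have h2 : HasDerivAt (fun t : ℝ => Real.log (1 - t)) (-1 / (1 - t)) t := by
      have h9 := (((hasDerivAt_const t (1:ℝ)).sub (hasDerivAt_id t)).log
        (by intro hc; simp at hc; nlinarith))
      simpa using h9
    simp only [hBfdef, hBf'def]
    exact ((h1.sub h2).const_mul 2⁻¹).const_mul C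
  -- apply the fencing theorem
  have hmain : ‖F ρ - F 0‖ ≤ Bf ρ := by
    have happ := image_norm_le_of_norm_deriv_right_le_deriv_boundary'
      (f := fun t => F t - F 0) (f' := F') (a := 0) (b := ρ) (B := Bf) (B' := Bf')
      (fun t ht => ((hF' t ht).sub_const (F 0)).continuousAt.continuousWithinAt)
      (fun t ht => ((hF' t (Ico_subset_Icc_self ht)).sub_const (F 0)).hasDerivWithinAt)
      (by simp [hBfdef])
      (fun t ht => (hBd t ht).continuousAt.continuousWithinAt)
      (fun t ht => (hBd t (Ico_subset_Icc_self ht)).hasDerivWithinAt)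
      hbound
    exact happ ⟨hρpos.le, le_refl ρ⟩
  -- conclude
  have hF0 : F 0 = h z₂ + (starRingEnd ℂ) (g z₂) := by simp only [hFdef]; rw [hφ0]
  have hFρ : F ρ = h z₁ + (starRingEnd ℂ) (g z₁) := by simp only [hFdef]; rw [hφρ]
  have hBρ : Bf ρ = C * (2⁻¹ * Real.log ((1 + ρ) / (1 - ρ))) := by
    simp only [hBfdef]
    rw [Real.log_div (by linarith) (by linarith)]
  calc ‖(h z₁ + (starRingEnd ℂ) (g z₁)) - (h z₂ + (starRingEnd ℂ) (g z₂))‖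
      = ‖F ρ - F 0‖ := by rw [hF0, hFρ]
    _ ≤ Bf ρ := hmain
    _ = Real.sqrt ((1 + k) / (1 - k)) * β * (1 / 2 * Real.log ((1 + ρ) / (1 - ρ))) := by
        rw [hBρ, hCdef]; norm_num
end
end

section
/- Let h(z) = 2(1−z)^{−1/2} (principal branch) and let f = h + conj(g) be the sense-preserving harmonic mapping on 𝔻 with dilatation w(z) = z, so that J_f(z) = (1−|z|²)/|1−z|³. Then along the real axis, lim_{x→1⁻} (1−x²)√(J_f(x)) = 2^{3/2} ≠ 0; in particular f does not belong to the little Bloch-type class 𝔅𝒯₀, i.e. it is false that lim_{|z|→1⁻} (1−|z|²)√(J_f(z)) = 0. -/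
open MeasureTheory Metric Complex Set Filter Topology

noncomputable section

lemma hfun_deriv {x : ℝ} (hx : x < 1) :
    deriv hfun (x : ℂ) = (1 - (x : ℂ)) ^ (-(3 / 2) : ℂ) := by
  have h1 : HasDerivAt (fun w : ℂ => 1 - w) (-1) (x : ℂ) := by
    simpa using (hasDerivAt_id (x : ℂ)).const_sub (1 : ℂ)
  have hpos : 0 < ((1 : ℂ) - (x : ℂ)).re := by simp [Complex.sub_re]; linarith
  have h2 : HasDerivAt (fun w : ℂ => (1 - w) ^ (-(1 / 2) : ℂ))
      ((-(1 / 2) : ℂ) * (1 - (x : ℂ)) ^ ((-(1 / 2) : ℂ) - 1) * (-1)) (x : ℂ) :=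
    h1.cpow_const (Or.inl hpos)
  have h3 := h2.const_mul (2 : ℂ)
  have : deriv hfun (x : ℂ)
      = 2 * ((-(1 / 2) : ℂ) * (1 - (x : ℂ)) ^ ((-(1 / 2) : ℂ) - 1) * (-1)) := by
    exact h3.deriv
  rw [this, show ((-(1 / 2) : ℂ) - 1) = (-(3 / 2) : ℂ) by norm_num]
  ring

lemma hfun_norm_deriv {x : ℝ} (hx : x < 1) :
    ‖deriv hfun (x : ℂ)‖ = (1 - x) ^ (-(3 / 2) : ℝ) := by
  rw [hfun_deriv hx, show (1 : ℂ) - (x : ℂ) = ((1 - x : ℝ) : ℂ) by push_cast; ring,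
    Complex.norm_cpow_eq_rpow_re_of_pos (by linarith)]
  norm_num

/-- For `h(z) = 2(1-z)^{-1/2}` and `f = h + conj g` with dilatation
`w(z) = z`, along the real axis `(1-x²)√(J_f(x)) → 2^{3/2} ≠ 0` as `x → 1⁻`; in
particular `f ∉ 𝔅𝒯₀`. -/
theorem shear_example_not_littleBlochType
    (g : ℂ → ℂ) (hg : DifferentiableOn ℂ g unitDisk)
    (hgd : ∀ z ∈ unitDisk, deriv g z = z * deriv hfun z) :
    Tendsto (fun x : ℝ =>
        (1 - x ^ 2) * Real.sqrt (‖deriv hfun (x : ℂ)‖ ^ 2 - ‖deriv g (x : ℂ)‖ ^ 2))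
      (𝓝[<] 1) (𝓝 (2 ^ ((3 : ℝ) / 2)))
    ∧ ¬ (∀ ε : ℝ, 0 < ε → ∃ r : ℝ, 0 ≤ r ∧ r < 1 ∧ ∀ z ∈ unitDisk, r < ‖z‖ →
          (1 - ‖z‖ ^ 2) * Real.sqrt (‖deriv hfun z‖ ^ 2 - ‖deriv g z‖ ^ 2) < ε) := by
  have hmem : ∀ x : ℝ, 0 < x → x < 1 → (x : ℂ) ∈ unitDisk := by
    intro x hx0 hx1
    simp only [unitDisk, Metric.mem_ball, dist_zero_right, Complex.norm_real,
      Real.norm_eq_abs]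
    rw [abs_of_pos hx0]; exact hx1
  -- key computation: the expression equals (1+x)^(3/2) for x ∈ (0,1)
  have key : ∀ x : ℝ, 0 < x → x < 1 →
      (1 - x ^ 2) * Real.sqrt (‖deriv hfun (x : ℂ)‖ ^ 2 - ‖deriv g (x : ℂ)‖ ^ 2)
        = (1 + x) ^ ((3 : ℝ) / 2) := by
    intro x hx0 hx1
    have hb : ‖deriv hfun (x : ℂ)‖ = (1 - x) ^ (-(3 / 2) : ℝ) := hfun_norm_deriv hx1
    set b : ℝ := (1 - x) ^ (-(3 / 2) : ℝ) with hbdef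
    have hbpos : 0 < b := Real.rpow_pos_of_pos (by linarith) _
    have hgnorm : ‖deriv g (x : ℂ)‖ = x * b := by
      rw [hgd _ (hmem x hx0 hx1), norm_mul, Complex.norm_real, Real.norm_eq_abs,
        abs_of_pos hx0, hb]
    have hA : ‖deriv hfun (x : ℂ)‖ ^ 2 - ‖deriv g (x : ℂ)‖ ^ 2
        = (1 - x ^ 2) * b ^ 2 := by rw [hb, hgnorm]; ring
    have h1x2 : (0 : ℝ) < 1 - x ^ 2 := by nlinarith
    rw [hA, Real.sqrt_mul h1x2.le, Real.sqrt_sq hbpos.le]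
    have hsq : Real.sqrt (1 - x ^ 2) = (1 - x ^ 2) ^ ((1 : ℝ) / 2) :=
      Real.sqrt_eq_rpow _
    have hstep : (1 - x ^ 2) * (1 - x ^ 2) ^ ((1 : ℝ) / 2)
        = (1 - x ^ 2) ^ ((3 : ℝ) / 2) := by
      rw [show ((3 : ℝ) / 2) = 1 + 1 / 2 by norm_num, Real.rpow_add h1x2,
        Real.rpow_one]
    have hsplit : (1 - x ^ 2) ^ ((3 : ℝ) / 2)
        = (1 - x) ^ ((3 : ℝ) / 2) * (1 + x) ^ ((3 : ℝ) / 2) := by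
      rw [show (1 - x ^ 2) = (1 - x) * (1 + x) by ring,
        Real.mul_rpow (by linarith) (by linarith)]
    have hcancel : (1 - x) ^ ((3 : ℝ) / 2) * b = 1 := by
      rw [hbdef, ← Real.rpow_add (by linarith : (0 : ℝ) < 1 - x)]
      norm_num
    calc (1 - x ^ 2) * (Real.sqrt (1 - x ^ 2) * b)
        = ((1 - x ^ 2) * (1 - x ^ 2) ^ ((1 : ℝ) / 2)) * b := by rw [hsq]; ring
      _ = (1 - x) ^ ((3 : ℝ) / 2) * (1 + x) ^ ((3 : ℝ) / 2) * b := by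
          rw [hstep, hsplit]
      _ = ((1 - x) ^ ((3 : ℝ) / 2) * b) * (1 + x) ^ ((3 : ℝ) / 2) := by ring
      _ = (1 + x) ^ ((3 : ℝ) / 2) := by rw [hcancel]; ring
  have hEv : ∀ᶠ x : ℝ in 𝓝[<] (1 : ℝ), x ∈ Ioo (0 : ℝ) 1 :=
    Ioo_mem_nhdsLT_of_mem ⟨by norm_num, le_refl 1⟩
  have htend : Tendsto (fun x : ℝ =>
      (1 - x ^ 2) * Real.sqrt (‖deriv hfun (x : ℂ)‖ ^ 2 - ‖deriv g (x : ℂ)‖ ^ 2))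
      (𝓝[<] 1) (𝓝 ((2 : ℝ) ^ ((3 : ℝ) / 2))) := by
    have h2 : Tendsto (fun x : ℝ => (1 + x) ^ ((3 : ℝ) / 2)) (𝓝[<] (1 : ℝ))
        (𝓝 ((2 : ℝ) ^ ((3 : ℝ) / 2))) := by
      have : Tendsto (fun x : ℝ => 1 + x) (𝓝[<] (1 : ℝ)) (𝓝 (2 : ℝ)) := by
        have h := ((tendsto_id : Tendsto id (𝓝 (1 : ℝ)) (𝓝 1)).const_add
          (1 : ℝ)).mono_left (nhdsWithin_le_nhds : 𝓝[<] (1 : ℝ) ≤ 𝓝 1)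
        norm_num at h
        exact h
      exact this.rpow_const (Or.inl two_ne_zero)
    refine h2.congr' ?_
    filter_upwards [hEv] with x hx
    exact (key x hx.1 hx.2).symm
  refine ⟨htend, ?_⟩
  intro H
  obtain ⟨r, hr0, hr1, hall⟩ := H 1 one_pos
  -- eventually the expression exceeds 1
  have hgt : ∀ᶠ x : ℝ in 𝓝[<] (1 : ℝ),
      1 < (1 - x ^ 2) * Real.sqrt (‖deriv hfun (x : ℂ)‖ ^ 2 - ‖deriv g (x : ℂ)‖ ^ 2) := by
    have hlim : (1 : ℝ) < (2 : ℝ) ^ ((3 : ℝ) / 2) := by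
      have : (2 : ℝ) ^ ((1 : ℝ)) ≤ (2 : ℝ) ^ ((3 : ℝ) / 2) :=
        Real.rpow_le_rpow_of_exponent_le (by norm_num) (by norm_num)
      rw [Real.rpow_one] at this; linarith
    exact htend.eventually (eventually_gt_nhds hlim)
  have hr' : ∀ᶠ x : ℝ in 𝓝[<] (1 : ℝ), x ∈ Ioo r 1 :=
    Ioo_mem_nhdsLT_of_mem ⟨hr1, le_refl 1⟩
  obtain ⟨x, hx1, hx2, hx3⟩ := (hgt.and (hr'.and hEv)).exists
  have hxr := hx2.1
  have hxlt := hx2.2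
  have hx0 := hx3.1
  have hz : (x : ℂ) ∈ unitDisk := hmem x hx0 hxlt
  have hnorm : ‖(x : ℂ)‖ = x := by
    rw [Complex.norm_real, Real.norm_eq_abs, abs_of_pos hx0]
  have := hall (x : ℂ) hz (by rw [hnorm]; exact hxr)
  rw [hnorm] at this
  linarith
end
end

section
/- Let h(z) = 2(1−z)^{−1/2} (principal branch) and let f = h + conj(g) be the sense-preserving harmonic mapping on 𝔻 with dilatation w(z) = z, so that J_f(z) = (1−|z|²)/|1−z|³. Then for every p > 1, sup_{a∈𝔻} ∫_𝔻 J_f(z) (1−|φ_a(z)|²)^p dA(z) ≤ 8 ∫_𝔻 (1−|ζ|²)^{p−2} dA(ζ) < ∞; in particular f ∈ 𝒬𝒯_p for all p > 1. -/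
open MeasureTheory Metric Complex Set Filter Topology

noncomputable section

open scoped ENNReal

lemma mem_unitDisk {z : ℂ} : z ∈ unitDisk ↔ ‖z‖ < 1 := by
  simp [unitDisk, Metric.mem_ball, Complex.dist_eq]

lemma denom_ne_zero {a z : ℂ} (ha : ‖a‖ < 1) (hz : ‖z‖ < 1) :
    (1 : ℂ) - (starRingEnd ℂ) a * z ≠ 0 := by
  intro h
  have h1 : (1 : ℂ) = (starRingEnd ℂ) a * z := by linear_combination h
  have : ‖(starRingEnd ℂ) a * z‖ < 1 := by
    rw [norm_mul, RCLike.norm_conj]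
    nlinarith [norm_nonneg a, norm_nonneg z]
  rw [← h1] at this; simp at this

lemma normSq_identity (a z : ℂ) :
    Complex.normSq (1 - (starRingEnd ℂ) a * z) - Complex.normSq (a - z)
      = (1 - Complex.normSq a) * (1 - Complex.normSq z) := by
  simp [Complex.normSq_apply, Complex.mul_re, Complex.mul_im, Complex.sub_re,
    Complex.sub_im, Complex.one_re, Complex.one_im, Complex.conj_re, Complex.conj_im]
  ring

lemma nsq (z : ℂ) : Complex.normSq z = ‖z‖ ^ 2 := by
  rw [Complex.sq_norm]

lemma one_sub_moebius_sq {a z : ℂ} (ha : ‖a‖ < 1) (hz : ‖z‖ < 1) :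
    1 - ‖moebius a z‖ ^ 2
      = (1 - ‖a‖ ^ 2) * (1 - ‖z‖ ^ 2) / ‖1 - (starRingEnd ℂ) a * z‖ ^ 2 := by
  have hd := denom_ne_zero ha hz
  have hd2 : ‖(1 : ℂ) - (starRingEnd ℂ) a * z‖ ^ 2 ≠ 0 :=
    pow_ne_zero 2 (norm_ne_zero_iff.mpr hd)
  have h := normSq_identity a z
  rw [nsq, nsq, nsq, nsq] at h
  rw [moebius, norm_div, div_pow, eq_div_iff hd2, sub_mul, div_mul_cancel₀ _ hd2]
  linarith [h]

lemma moebius_mem {a z : ℂ} (ha : ‖a‖ < 1) (hz : ‖z‖ < 1) : ‖moebius a z‖ < 1 := by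
  have h := one_sub_moebius_sq ha hz
  have hd : (0:ℝ) < ‖(1 : ℂ) - (starRingEnd ℂ) a * z‖ ^ 2 :=
    pow_pos (norm_pos_iff.mpr (denom_ne_zero ha hz)) 2
  have hpos : 0 < 1 - ‖moebius a z‖ ^ 2 := by
    rw [h]; apply div_pos _ hd
    apply mul_pos <;> nlinarith [norm_nonneg a, norm_nonneg z]
  nlinarith [norm_nonneg (moebius a z)]

lemma moebius_invol {a z : ℂ} (ha : ‖a‖ < 1) (hz : ‖z‖ < 1) :
    moebius a (moebius a z) = z := by
  have hd := denom_ne_zero ha hz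
  have hna : (1 : ℂ) - (starRingEnd ℂ) a * a ≠ 0 := denom_ne_zero ha ha
  unfold moebius
  have hd2 : (1 : ℂ) - (starRingEnd ℂ) a * ((a - z) / (1 - (starRingEnd ℂ) a * z)) ≠ 0 := by
    intro h
    apply hna
    have h2 : ((1 : ℂ) - (starRingEnd ℂ) a * z) - (starRingEnd ℂ) a * (a - z) = 0 := by
      have := mul_eq_zero_of_left h ((1 : ℂ) - (starRingEnd ℂ) a * z)
      field_simp at this
      linear_combination this
    linear_combination h2
  rw [div_eq_iff hd2]
  linear_combination -(div_mul_cancel₀ (a - z) hd)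

lemma moebius_injOn {a : ℂ} (ha : ‖a‖ < 1) : Set.InjOn (moebius a) unitDisk := by
  intro x hx y hy h
  rw [mem_unitDisk] at hx hy
  have := congrArg (moebius a) h
  rwa [moebius_invol ha hx, moebius_invol ha hy] at this

lemma moebius_image {a : ℂ} (ha : ‖a‖ < 1) : moebius a '' unitDisk = unitDisk := by
  apply Set.Subset.antisymm
  · rintro _ ⟨z, hz, rfl⟩
    rw [mem_unitDisk] at hz ⊢
    exact moebius_mem ha hz
  · intro z hz
    rw [mem_unitDisk] at hz
    exact ⟨moebius a z, mem_unitDisk.mpr (moebius_mem ha hz), moebius_invol ha hz⟩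

lemma moebius_hasDerivAt {a z : ℂ} (ha : ‖a‖ < 1) (hz : ‖z‖ < 1) :
    HasDerivAt (moebius a)
      (((Complex.normSq a : ℂ) - 1) / (1 - (starRingEnd ℂ) a * z) ^ 2) z := by
  have hd := denom_ne_zero ha hz
  have h1 : HasDerivAt (fun w : ℂ => a - w) (-1) z := by
    simpa using (hasDerivAt_id z).const_sub a
  have h2 : HasDerivAt (fun w : ℂ => 1 - (starRingEnd ℂ) a * w) (-(starRingEnd ℂ) a) z := by
    simpa using ((hasDerivAt_id z).const_mul ((starRingEnd ℂ) a)).const_sub 1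
  have := h1.div h2 hd
  have hc : (starRingEnd ℂ) a * a = (Complex.normSq a : ℂ) := by
    simpa [mul_comm] using Complex.mul_conj a
  refine this.congr_deriv ?_
  rw [← hc]
  ring

lemma det_complex_smulRight (d : ℂ) :
    (((1 : ℂ →L[ℂ] ℂ).smulRight d).restrictScalars ℝ).det = Complex.normSq d := by
  rw [ContinuousLinearMap.det, ← LinearMap.det_toMatrix Complex.basisOneI,
    Matrix.det_fin_two]
  simp [LinearMap.toMatrix_apply, Complex.coe_basisOneI_repr, Complex.normSq_apply,
    Complex.mul_re, Complex.mul_im, smul_eq_mul]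


lemma hfun_hasDerivAt {z : ℂ} (hz : ‖z‖ < 1) :
    HasDerivAt hfun ((1 - z) ^ (-(3 / 2) : ℂ)) z := by
  have hre : 0 < (1 - z).re := by
    have := Complex.abs_re_le_norm z
    simp only [Complex.sub_re, Complex.one_re]
    have h3 := abs_lt.mp (lt_of_le_of_lt this hz)
    linarith [h3.1, h3.2]
  have h1 : HasDerivAt (fun w : ℂ => 1 - w) (-1) z := by
    simpa using (hasDerivAt_id z).const_sub 1
  have h2 := (h1.cpow_const (c := (-(1 / 2) : ℂ)) (Or.inl hre)).const_mul (2 : ℂ)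
  unfold hfun
  refine h2.congr_deriv ?_
  rw [show (-(1 / 2) : ℂ) - 1 = (-(3 / 2) : ℂ) by norm_num]
  ring

lemma norm_cpow_real (w : ℂ) (hw : w ≠ 0) (r : ℝ) :
    ‖w ^ (r : ℂ)‖ = ‖w‖ ^ r := by
  exact Complex.norm_cpow_real w r

lemma one_sub_ne {z : ℂ} (hz : ‖z‖ < 1) : (1 : ℂ) - z ≠ 0 := by
  intro h
  have : z = 1 := by linear_combination -h
  rw [this] at hz; simp at hz

lemma deriv_hfun_norm_sq {z : ℂ} (hz : ‖z‖ < 1) :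
    ‖deriv hfun z‖ ^ 2 = (‖1 - z‖ ^ 3)⁻¹ := by
  have ht : 0 < ‖(1:ℂ) - z‖ := norm_pos_iff.mpr (one_sub_ne hz)
  rw [(hfun_hasDerivAt hz).deriv]
  have hc : (-(3 / 2) : ℂ) = ((-(3/2) : ℝ) : ℂ) := by norm_num
  rw [hc, norm_cpow_real _ (one_sub_ne hz)]
  rw [← Real.rpow_natCast (‖(1:ℂ) - z‖ ^ ((-(3/2)) : ℝ)) 2, ← Real.rpow_mul ht.le]
  rw [show ((-(3/2)) : ℝ) * (2:ℕ) = -(3:ℕ) by norm_num]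
  rw [Real.rpow_neg ht.le, Real.rpow_natCast]

lemma jac_le {z : ℂ} (hz : ‖z‖ < 1) :
    ‖deriv hfun z‖ ^ 2 * (1 - ‖z‖ ^ 2) ≤ 8 / (1 - ‖z‖ ^ 2) ^ 2 := by
  have ht : 0 < ‖(1:ℂ) - z‖ := norm_pos_iff.mpr (one_sub_ne hz)
  have hts : 1 - ‖z‖ ≤ ‖(1:ℂ) - z‖ := by
    simpa using norm_sub_norm_le (1:ℂ) z
  have hs0 : 0 ≤ ‖z‖ := norm_nonneg z
  have hB : 0 < 1 - ‖z‖ ^ 2 := by nlinarith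
  have h2t : 1 - ‖z‖ ^ 2 ≤ 2 * ‖(1:ℂ) - z‖ := by nlinarith
  have key : (1 - ‖z‖ ^ 2) ^ 3 ≤ 8 * ‖(1:ℂ) - z‖ ^ 3 := by nlinarith [pow_le_pow_left₀ hB.le h2t 3]
  rw [deriv_hfun_norm_sq hz, inv_mul_eq_div, div_le_div_iff₀ (by positivity) (by positivity)]
  nlinarith

lemma fin_cover (p : ℝ) :
    unitDisk ⊆ ⋃ n : ℕ,
      (Metric.ball (0:ℂ) (1 - (2⁻¹:ℝ) ^ (n+1)) \ Metric.ball (0:ℂ) (1 - (2⁻¹:ℝ) ^ n)) := by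
  classical
  intro z hz
  rw [mem_unitDisk] at hz
  have hex : ∃ n : ℕ, ‖z‖ < 1 - (2⁻¹:ℝ) ^ (n+1) := by
    obtain ⟨n, hn⟩ := exists_pow_lt_of_lt_one (x := 1 - ‖z‖) (by linarith)
      (by norm_num : (2⁻¹:ℝ) < 1)
    refine ⟨n, ?_⟩
    have : ((2⁻¹:ℝ)) ^ (n+1) ≤ (2⁻¹:ℝ) ^ n :=
      pow_le_pow_of_le_one (by norm_num) (by norm_num) (Nat.le_succ n)
    linarith
  refine Set.mem_iUnion.mpr ⟨Nat.find hex, ?_⟩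
  constructor
  · rw [mem_ball_zero_iff]
    exact Nat.find_spec hex
  · rw [mem_ball_zero_iff]
    push_neg
    cases hN : Nat.find hex with
    | zero => simpa using norm_nonneg z
    | succ m =>
      have hmin := Nat.find_min hex (m := m) (by omega)
      push_neg at hmin
      exact hmin

lemma annulus_integrand_bound (p : ℝ) (hp : 1 < p) (n : ℕ) {z : ℂ}
    (hz : z ∈ Metric.ball (0:ℂ) (1 - (2⁻¹:ℝ) ^ (n+1)) \ Metric.ball (0:ℂ) (1 - (2⁻¹:ℝ) ^ n)) :
    (1 - ‖z‖ ^ 2) ^ (p - 2) ≤ ((2⁻¹:ℝ) ^ (n+1)) ^ (p - 2) + 1 := by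
  obtain ⟨hb, hs⟩ := hz
  rw [mem_ball_zero_iff] at hb
  rw [mem_ball_zero_iff] at hs; push_neg at hs
  have hδ : (0:ℝ) < (2⁻¹:ℝ) ^ (n+1) := by positivity
  have hz1 : ‖z‖ < 1 := by nlinarith
  have h0 : 0 ≤ ‖z‖ := norm_nonneg z
  have hBδ : (2⁻¹:ℝ) ^ (n+1) < 1 - ‖z‖ ^ 2 := by nlinarith
  have hB1 : 1 - ‖z‖ ^ 2 ≤ 1 := by nlinarith
  rcases le_or_gt 2 p with h2p | h2p
  · have h1 := Real.rpow_le_one (x := 1 - ‖z‖ ^ 2) (z := p - 2) (by nlinarith) hB1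
      (by linarith)
    have h2 : (0:ℝ) ≤ ((2⁻¹:ℝ) ^ (n+1)) ^ (p - 2) := Real.rpow_nonneg hδ.le _
    linarith
  · have h1 := Real.rpow_le_rpow_of_nonpos (x := (2⁻¹:ℝ) ^ (n+1)) (y := 1 - ‖z‖ ^ 2)
      (z := p - 2) hδ hBδ.le (by linarith)
    linarith

lemma annulus_measure (n : ℕ) :
    volume (Metric.ball (0:ℂ) (1 - (2⁻¹:ℝ) ^ (n+1)) \ Metric.ball (0:ℂ) (1 - (2⁻¹:ℝ) ^ n))
      ≤ ENNReal.ofReal (Real.pi * (2⁻¹:ℝ) ^ n) := by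
  set a : ℝ := 1 - (2⁻¹:ℝ) ^ n
  set b : ℝ := 1 - (2⁻¹:ℝ) ^ (n+1)
  have hab : a ≤ b := by
    have : ((2⁻¹:ℝ)) ^ (n+1) ≤ (2⁻¹:ℝ) ^ n :=
      pow_le_pow_of_le_one (by norm_num) (by norm_num) (Nat.le_succ n)
    simp only [a, b]; linarith
  have ha0 : 0 ≤ a := by
    have : ((2⁻¹:ℝ)) ^ n ≤ 1 := pow_le_one₀ (by norm_num) (by norm_num)
    simp only [a]; linarith
  have hb1 : b ≤ 1 := by
    have : (0:ℝ) < (2⁻¹:ℝ) ^ (n+1) := by positivity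
    simp only [b]; linarith
  have hvol : ∀ r : ℝ, 0 ≤ r → volume (Metric.ball (0:ℂ) r) = ENNReal.ofReal (r ^ 2 * Real.pi) := by
    intro r hr
    rw [Complex.volume_ball, ← ENNReal.ofReal_pow hr, ← NNReal.coe_real_pi,
      ENNReal.ofReal_coe_nnreal.symm, ← ENNReal.ofReal_mul (by positivity)]
  calc volume (Metric.ball (0:ℂ) b \ Metric.ball (0:ℂ) a)
      ≤ volume (Metric.ball (0:ℂ) b) - volume (Metric.ball (0:ℂ) a) := by
        rw [measure_diff (Metric.ball_subset_ball hab) measurableSet_ball.nullMeasurableSet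
          (measure_ball_lt_top).ne]
    _ ≤ ENNReal.ofReal (Real.pi * (2⁻¹:ℝ) ^ n) := by
        rw [hvol b (le_trans ha0 hab), hvol a ha0, tsub_le_iff_right,
          ← ENNReal.ofReal_add (by positivity) (by positivity)]
        apply ENNReal.ofReal_le_ofReal
        have hba : b - a = (2⁻¹:ℝ) ^ (n+1) := by simp only [a, b]; ring
        have key : ∀ x y : ℝ, 0 ≤ x → x ≤ y → y ≤ 1 → y - x = (2⁻¹:ℝ) ^ (n+1) →
            y ^ 2 * Real.pi ≤ Real.pi * (2⁻¹:ℝ) ^ n + x ^ 2 * Real.pi := by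
          intro x y hx hxy hy1 hyx
          have h2n : (2⁻¹:ℝ) ^ n = 2 * (y - x) := by rw [hyx, pow_succ]; ring
          have h3 : Real.pi * (2⁻¹:ℝ) ^ n = Real.pi * (2 * (y - x)) := by rw [h2n]
          nlinarith [h3, mul_nonneg (mul_nonneg (by linarith : (0:ℝ) ≤ 2 - (y + x))
            (by linarith : (0:ℝ) ≤ y - x)) Real.pi_nonneg]
        exact key a b ha0 hab hb1 hba

lemma geom_rewrite (p : ℝ) (n : ℕ) :
    (((2⁻¹:ℝ) ^ (n+1)) ^ (p-2) + 1) * (Real.pi * (2⁻¹:ℝ) ^ n)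
      = Real.pi * (2:ℝ) ^ (2-p) * ((2:ℝ) ^ (1-p)) ^ n + Real.pi * (2⁻¹:ℝ) ^ n := by
  have h2 : (0:ℝ) ≤ 2 := by norm_num
  have hhalf : ∀ m : ℕ, ((2⁻¹:ℝ)) ^ m = (2:ℝ) ^ (-(m:ℝ)) := by
    intro m
    rw [inv_pow, ← Real.rpow_natCast (2:ℝ) m, ← Real.rpow_neg h2]
  have key : (((2⁻¹:ℝ) ^ (n+1)) ^ (p-2)) * ((2⁻¹:ℝ) ^ n)
      = (2:ℝ) ^ (2-p) * ((2:ℝ) ^ (1-p)) ^ n := by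
    rw [hhalf (n+1), hhalf n, ← Real.rpow_natCast ((2:ℝ) ^ (1-p)) n,
      ← Real.rpow_mul h2, ← Real.rpow_mul h2, ← Real.rpow_add (by norm_num : (0:ℝ) < 2),
      ← Real.rpow_add (by norm_num : (0:ℝ) < 2)]
    congr 1
    push_cast
    ring
  linear_combination Real.pi * key

lemma fin_part (p : ℝ) (hp : 1 < p) :
    (∫⁻ ζ in unitDisk, ENNReal.ofReal ((1 - ‖ζ‖ ^ 2) ^ (p - 2))) < ⊤ := by
  have ht0 : (0:ℝ) ≤ (2:ℝ) ^ (1-p) := Real.rpow_nonneg (by norm_num) _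
  have ht1 : (2:ℝ) ^ (1-p) < 1 :=
    Real.rpow_lt_one_of_one_lt_of_neg (by norm_num) (by linarith)
  have hδnn : ∀ n : ℕ, (0:ℝ) ≤ ((2⁻¹:ℝ) ^ (n+1)) ^ (p-2) + 1 := by
    intro n
    have := Real.rpow_nonneg (by positivity : (0:ℝ) ≤ (2⁻¹:ℝ) ^ (n+1)) (p-2)
    linarith
  have step : ∀ n : ℕ,
      (∫⁻ z in (Metric.ball (0:ℂ) (1 - (2⁻¹:ℝ) ^ (n+1)) \ Metric.ball (0:ℂ) (1 - (2⁻¹:ℝ) ^ n)),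
          ENNReal.ofReal ((1 - ‖z‖ ^ 2) ^ (p - 2)))
        ≤ ENNReal.ofReal (Real.pi * (2:ℝ) ^ (2-p)) * (ENNReal.ofReal ((2:ℝ) ^ (1-p))) ^ n
          + ENNReal.ofReal Real.pi * (ENNReal.ofReal (2⁻¹:ℝ)) ^ n := by
    intro n
    calc (∫⁻ z in (Metric.ball (0:ℂ) (1 - (2⁻¹:ℝ) ^ (n+1)) \ Metric.ball (0:ℂ) (1 - (2⁻¹:ℝ) ^ n)),
          ENNReal.ofReal ((1 - ‖z‖ ^ 2) ^ (p - 2)))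
        ≤ ∫⁻ _ in (Metric.ball (0:ℂ) (1 - (2⁻¹:ℝ) ^ (n+1)) \ Metric.ball (0:ℂ) (1 - (2⁻¹:ℝ) ^ n)),
            ENNReal.ofReal (((2⁻¹:ℝ) ^ (n+1)) ^ (p-2) + 1) := by
          apply lintegral_mono_ae
          rw [ae_restrict_iff' (measurableSet_ball.diff measurableSet_ball)]
          exact Filter.Eventually.of_forall fun z hz =>
            ENNReal.ofReal_le_ofReal (annulus_integrand_bound p hp n hz)
      _ = ENNReal.ofReal (((2⁻¹:ℝ) ^ (n+1)) ^ (p-2) + 1)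
            * volume (Metric.ball (0:ℂ) (1 - (2⁻¹:ℝ) ^ (n+1))
                \ Metric.ball (0:ℂ) (1 - (2⁻¹:ℝ) ^ n)) := setLIntegral_const _ _
      _ ≤ ENNReal.ofReal (((2⁻¹:ℝ) ^ (n+1)) ^ (p-2) + 1)
            * ENNReal.ofReal (Real.pi * (2⁻¹:ℝ) ^ n) :=
          mul_le_mul_right (annulus_measure n) _
      _ = ENNReal.ofReal ((((2⁻¹:ℝ) ^ (n+1)) ^ (p-2) + 1) * (Real.pi * (2⁻¹:ℝ) ^ n)) :=
          (ENNReal.ofReal_mul (hδnn n)).symm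
      _ = ENNReal.ofReal (Real.pi * (2:ℝ) ^ (2-p) * ((2:ℝ) ^ (1-p)) ^ n
            + Real.pi * (2⁻¹:ℝ) ^ n) := by rw [geom_rewrite]
      _ = ENNReal.ofReal (Real.pi * (2:ℝ) ^ (2-p)) * (ENNReal.ofReal ((2:ℝ) ^ (1-p))) ^ n
            + ENNReal.ofReal Real.pi * (ENNReal.ofReal (2⁻¹:ℝ)) ^ n := by
          rw [ENNReal.ofReal_add (by positivity) (by positivity),
            ENNReal.ofReal_mul (by positivity), ENNReal.ofReal_mul Real.pi_nonneg,
            ENNReal.ofReal_pow ht0, ← ENNReal.ofReal_pow (by norm_num : (0:ℝ) ≤ (2⁻¹:ℝ))]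
          congr 1
          rw [ENNReal.ofReal_mul Real.pi_nonneg]
  calc (∫⁻ ζ in unitDisk, ENNReal.ofReal ((1 - ‖ζ‖ ^ 2) ^ (p - 2)))
      ≤ ∫⁻ ζ in ⋃ n : ℕ, (Metric.ball (0:ℂ) (1 - (2⁻¹:ℝ) ^ (n+1))
          \ Metric.ball (0:ℂ) (1 - (2⁻¹:ℝ) ^ n)),
          ENNReal.ofReal ((1 - ‖ζ‖ ^ 2) ^ (p - 2)) :=
        lintegral_mono_set (fin_cover p)
    _ ≤ ∑' n : ℕ, ∫⁻ ζ in (Metric.ball (0:ℂ) (1 - (2⁻¹:ℝ) ^ (n+1))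
          \ Metric.ball (0:ℂ) (1 - (2⁻¹:ℝ) ^ n)),
          ENNReal.ofReal ((1 - ‖ζ‖ ^ 2) ^ (p - 2)) := lintegral_iUnion_le _ _
    _ ≤ ∑' n : ℕ, (ENNReal.ofReal (Real.pi * (2:ℝ) ^ (2-p))
          * (ENNReal.ofReal ((2:ℝ) ^ (1-p))) ^ n
          + ENNReal.ofReal Real.pi * (ENNReal.ofReal (2⁻¹:ℝ)) ^ n) :=
        ENNReal.tsum_le_tsum step
    _ = ENNReal.ofReal (Real.pi * (2:ℝ) ^ (2-p)) * (1 - ENNReal.ofReal ((2:ℝ) ^ (1-p)))⁻¹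
          + ENNReal.ofReal Real.pi * (1 - ENNReal.ofReal (2⁻¹:ℝ))⁻¹ := by
        rw [ENNReal.tsum_add, ENNReal.tsum_mul_left, ENNReal.tsum_mul_left,
          ENNReal.tsum_geometric, ENNReal.tsum_geometric]
    _ < ⊤ := by
        apply ENNReal.add_lt_top.mpr
        constructor <;> apply ENNReal.mul_lt_top ENNReal.ofReal_lt_top
        · exact ENNReal.inv_lt_top.mpr (tsub_pos_iff_lt.mpr (ENNReal.ofReal_lt_one.mpr ht1))
        · exact ENNReal.inv_lt_top.mpr (tsub_pos_iff_lt.mpr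
            (ENNReal.ofReal_lt_one.mpr (by norm_num)))

lemma real_algebra {A1 B C : ℝ} (hA : 0 < A1) (hB : 0 < B) (hC : 0 < C) (p : ℝ) :
    A1 ^ 2 / C ^ 2 * (8 / (A1 * B / C) ^ 2 * B ^ p) = 8 * B ^ (p - 2) := by
  have hBp : B ^ p = B ^ (p - 2) * B ^ 2 := by
    rw [← Real.rpow_natCast B 2, ← Real.rpow_add hB]
    norm_num
  have hBpos : 0 < B ^ (p - 2) := Real.rpow_pos_of_pos hB _
  rw [hBp]
  field_simp

lemma det_moebius {a : ℂ} (ha : ‖a‖ < 1) {ζ : ℂ} (hζ : ‖ζ‖ < 1) :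
    |((((1 : ℂ →L[ℂ] ℂ).smulRight
        (((Complex.normSq a : ℂ) - 1) / (1 - (starRingEnd ℂ) a * ζ) ^ 2)).restrictScalars ℝ)).det|
      = (1 - ‖a‖ ^ 2) ^ 2 / (‖1 - (starRingEnd ℂ) a * ζ‖ ^ 2) ^ 2 := by
  rw [det_complex_smulRight, _root_.abs_of_nonneg (Complex.normSq_nonneg _)]
  rw [map_div₀ Complex.normSq, map_pow Complex.normSq]
  congr 1
  · have hcast : ((Complex.normSq a : ℂ) - 1) = (((Complex.normSq a - 1 : ℝ)) : ℂ) := by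
      push_cast; ring
    rw [hcast, Complex.normSq_ofReal, nsq a]
    ring
  · rw [nsq]

lemma main_bound {a : ℂ} (ha : ‖a‖ < 1) (p : ℝ) (hp : 1 < p)
    (g : ℂ → ℂ) (hgd : ∀ z ∈ unitDisk, deriv g z = z * deriv hfun z) :
    ∫⁻ z in unitDisk, ENNReal.ofReal
        ((‖deriv hfun z‖ ^ 2 - ‖deriv g z‖ ^ 2) * (1 - ‖moebius a z‖ ^ 2) ^ p)
      ≤ 8 * ∫⁻ ζ in unitDisk, ENNReal.ofReal ((1 - ‖ζ‖ ^ 2) ^ (p - 2)) := by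
  have hDmeas : MeasurableSet unitDisk := measurableSet_ball
  set A : ℂ → ℝ≥0∞ := fun z =>
    ENNReal.ofReal (8 / (1 - ‖z‖ ^ 2) ^ 2 * (1 - ‖moebius a z‖ ^ 2) ^ p) with hA
  have step1 : ∫⁻ z in unitDisk, ENNReal.ofReal
        ((‖deriv hfun z‖ ^ 2 - ‖deriv g z‖ ^ 2) * (1 - ‖moebius a z‖ ^ 2) ^ p)
      ≤ ∫⁻ z in unitDisk, A z := by
    apply lintegral_mono_ae
    rw [ae_restrict_iff' hDmeas]
    refine Filter.Eventually.of_forall fun z hz => ?_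
    have hz1 : ‖z‖ < 1 := mem_unitDisk.mp hz
    apply ENNReal.ofReal_le_ofReal
    have hm : (0:ℝ) ≤ (1 - ‖moebius a z‖ ^ 2) ^ p := by
      have := moebius_mem ha hz1
      apply Real.rpow_nonneg
      nlinarith [norm_nonneg (moebius a z)]
    apply mul_le_mul_of_nonneg_right _ hm
    rw [hgd z hz, norm_mul, mul_pow]
    calc ‖deriv hfun z‖ ^ 2 - ‖z‖ ^ 2 * ‖deriv hfun z‖ ^ 2
        = ‖deriv hfun z‖ ^ 2 * (1 - ‖z‖ ^ 2) := by ring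
      _ ≤ 8 / (1 - ‖z‖ ^ 2) ^ 2 := jac_le hz1
  set f' : ℂ → ℂ →L[ℝ] ℂ := fun ζ =>
    (((1 : ℂ →L[ℂ] ℂ).smulRight
      (((Complex.normSq a : ℂ) - 1) / (1 - (starRingEnd ℂ) a * ζ) ^ 2)).restrictScalars ℝ)
    with hf'def
  have hf' : ∀ ζ ∈ unitDisk, HasFDerivWithinAt (moebius a) (f' ζ) unitDisk ζ := fun ζ hζ =>
    (((moebius_hasDerivAt ha (mem_unitDisk.mp hζ)).hasFDerivAt).restrictScalars
      ℝ).hasFDerivWithinAt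
  have cov := lintegral_image_eq_lintegral_abs_det_fderiv_mul volume hDmeas hf'
    (moebius_injOn ha) A
  rw [moebius_image ha] at cov
  have step3 : ∫⁻ ζ in unitDisk, ENNReal.ofReal |(f' ζ).det| * A (moebius a ζ)
      = ∫⁻ ζ in unitDisk, ENNReal.ofReal (8 * (1 - ‖ζ‖ ^ 2) ^ (p - 2)) := by
    apply setLIntegral_congr_fun hDmeas
    intro ζ hζ
    beta_reduce
    have hζ1 : ‖ζ‖ < 1 := mem_unitDisk.mp hζ
    have hm1 : ‖moebius a ζ‖ < 1 := moebius_mem ha hζ1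
    have hC : (0:ℝ) < ‖1 - (starRingEnd ℂ) a * ζ‖ ^ 2 :=
      pow_pos (norm_pos_iff.mpr (denom_ne_zero ha hζ1)) 2
    have hA1 : (0:ℝ) < 1 - ‖a‖ ^ 2 := by nlinarith [norm_nonneg a]
    have hB : (0:ℝ) < 1 - ‖ζ‖ ^ 2 := by nlinarith [norm_nonneg ζ]
    rw [hf'def]
    rw [det_moebius ha hζ1, hA]
    beta_reduce
    rw [moebius_invol ha hζ1, one_sub_moebius_sq ha hζ1,
      ← ENNReal.ofReal_mul (by positivity)]
    rw [real_algebra hA1 hB hC p]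
  have step4 : ∫⁻ ζ in unitDisk, ENNReal.ofReal (8 * (1 - ‖ζ‖ ^ 2) ^ (p - 2))
      = 8 * ∫⁻ ζ in unitDisk, ENNReal.ofReal ((1 - ‖ζ‖ ^ 2) ^ (p - 2)) := by
    simp_rw [ENNReal.ofReal_mul (by norm_num : (0:ℝ) ≤ 8)]
    rw [lintegral_const_mul' _ _ (by simp)]
    norm_num
  calc ∫⁻ z in unitDisk, ENNReal.ofReal
        ((‖deriv hfun z‖ ^ 2 - ‖deriv g z‖ ^ 2) * (1 - ‖moebius a z‖ ^ 2) ^ p)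
      ≤ ∫⁻ z in unitDisk, A z := step1
    _ = ∫⁻ ζ in unitDisk, ENNReal.ofReal |(f' ζ).det| * A (moebius a ζ) := cov
    _ = ∫⁻ ζ in unitDisk, ENNReal.ofReal (8 * (1 - ‖ζ‖ ^ 2) ^ (p - 2)) := step3
    _ = 8 * ∫⁻ ζ in unitDisk, ENNReal.ofReal ((1 - ‖ζ‖ ^ 2) ^ (p - 2)) := step4

/-- For `h(z) = 2(1-z)^{-1/2}` and `f = h + conj g` with dilatation
`w(z) = z`, for every `p > 1`,
`sup_a ∫_𝔻 J_f (1-|φ_a|²)^p dA ≤ 8∫_𝔻 (1-|ζ|²)^{p-2} dA < ∞`; in particular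
`f ∈ 𝒬𝒯_p` for all `p > 1`. -/
theorem shear_example_QpType
    (g : ℂ → ℂ) (hg : DifferentiableOn ℂ g unitDisk)
    (hgd : ∀ z ∈ unitDisk, deriv g z = z * deriv hfun z)
    (p : ℝ) (hp : 1 < p) :
    (∀ a ∈ unitDisk,
      ∫⁻ z in unitDisk, ENNReal.ofReal
          ((‖deriv hfun z‖ ^ 2 - ‖deriv g z‖ ^ 2) * (1 - ‖moebius a z‖ ^ 2) ^ p)
        ≤ 8 * ∫⁻ ζ in unitDisk, ENNReal.ofReal ((1 - ‖ζ‖ ^ 2) ^ (p - 2)))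
    ∧ (∫⁻ ζ in unitDisk, ENNReal.ofReal ((1 - ‖ζ‖ ^ 2) ^ (p - 2))) < ⊤ := by
  constructor
  · intro a ha
    exact main_bound (mem_unitDisk.mp ha) p hp g hgd
  · exact fin_part p hp
end
end

section
/- Let p > 1 and let f = h + conj(g) be a sense-preserving harmonic mapping on 𝔻 with dilatation w(z) = z (i.e. g' = z·h'), so that J_f = |h'(z)|²(1−|z|²). If ∫_𝔻 J_f(z)^{p/2} (1−|z|²)^{p−2} dA(z) < ∞ (i.e. f ∈ 𝔅𝒯_p), then lim_{|z|→1⁻} (1−|z|²)√(J_f(z)) = 0 (i.e. f ∈ 𝔅𝒯₀). -/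
set_option maxHeartbeats 1000000


open MeasureTheory Metric Complex Set Filter Topology
open scoped ENNReal NNReal

noncomputable section

lemma circleMVP {F : ℂ → ℂ} (hF : DifferentiableOn ℂ F unitDisk) {z : ℂ} {s : ℝ}
    (hs : 0 < s) (hsub : closedBall z s ⊆ unitDisk) :
    2 * Real.pi * ‖F z‖ ≤ ∫ θ in (0:ℝ)..(2*Real.pi), ‖F (circleMap z s θ)‖ := by
  have hdcc : DiffContOnCl ℂ F (ball z s) := by
    refine ⟨hF.mono (le_trans ball_subset_closedBall hsub), ?_⟩
    refine (hF.continuousOn).mono ?_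
    rw [closure_ball z hs.ne']
    exact hsub
  have key := hdcc.circleIntegral_sub_inv_smul (mem_ball_self hs)
  have hint : (∮ w in C(z, s), (w - z)⁻¹ • F w)
      = ∫ θ in (0:ℝ)..(2*Real.pi), Complex.I * F (circleMap z s θ) := by
    rw [circleIntegral]
    refine intervalIntegral.integral_congr fun θ _ => ?_
    have hne : circleMap 0 s θ ≠ 0 := circleMap_ne_center hs.ne'
    simp only [deriv_circleMap, smul_eq_mul, circleMap_sub_center]
    field_simp
  rw [hint] at key
  rw [intervalIntegral.integral_const_mul] at key
  have hI : (∫ θ in (0:ℝ)..(2*Real.pi), F (circleMap z s θ)) = 2 * Real.pi * F z := by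
    have := key
    have hIne : (Complex.I : ℂ) ≠ 0 := Complex.I_ne_zero
    field_simp at this ⊢
    have h2 : Complex.I * (∫ θ in (0:ℝ)..(2*Real.pi), F (circleMap z s θ))
        = Complex.I * (2 * Real.pi * F z) := by
      rw [key]; rw [smul_eq_mul]; ring
    exact mul_left_cancel₀ hIne h2
  have hnorm : ‖(2 * Real.pi * F z : ℂ)‖ = 2 * Real.pi * ‖F z‖ := by
    rw [norm_mul]
    congr 1
    rw [show ((2:ℂ) * Real.pi) = ((2*Real.pi:ℝ):ℂ) by push_cast; ring,
      Complex.norm_real, Real.norm_of_nonneg Real.two_pi_pos.le]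
  calc 2 * Real.pi * ‖F z‖ = ‖(2 * Real.pi * F z : ℂ)‖ := hnorm.symm
    _ = ‖∫ θ in (0:ℝ)..(2*Real.pi), F (circleMap z s θ)‖ := by rw [hI]
    _ ≤ ∫ θ in (0:ℝ)..(2*Real.pi), ‖F (circleMap z s θ)‖ :=
        intervalIntegral.norm_integral_le_integral_norm Real.two_pi_pos.le

lemma ballMVP {F : ℂ → ℂ} (hF : DifferentiableOn ℂ F unitDisk) {z : ℂ} {δ : ℝ}
    (hδ : 0 < δ) (hsub : closedBall z δ ⊆ unitDisk) :
    Real.pi * δ^2 * ‖F z‖ ≤ ∫ w in ball z δ, ‖F w‖ := by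
  have hFc : ContinuousOn F unitDisk := hF.continuousOn
  set g : ℂ → ℝ := (ball (0:ℂ) δ).indicator (fun v => ‖F (z+v)‖) with hg
  set G : ℝ × ℝ → ℝ := fun q => q.1 * ‖F (z + Complex.polarCoord.symm q)‖ with hG
  set box : Set (ℝ × ℝ) := Ioo (0:ℝ) δ ×ˢ Ioo (-Real.pi) Real.pi with hbox
  -- continuity of G on the closed box
  have hGc : ContinuousOn G (Icc (0:ℝ) δ ×ˢ Icc (-Real.pi) Real.pi) := by
    refine ContinuousOn.mul (continuous_fst.continuousOn) ?_
    refine ContinuousOn.norm ?_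
    refine hFc.comp ?_ ?_
    · refine Continuous.continuousOn ?_
      refine continuous_const.add ?_
      show Continuous fun q : ℝ × ℝ => Complex.polarCoord.symm q
      simp only [Complex.polarCoord_symm_apply]
      fun_prop
    · intro q hq
      apply hsub
      simp only [mem_closedBall, dist_eq_norm, add_sub_cancel_left]
      rw [show ‖Complex.polarCoord.symm q‖ = |q.1| from Complex.norm_polarCoord_symm q]
      rw [_root_.abs_of_nonneg hq.1.1]
      exact hq.1.2
  have hGint : IntegrableOn G box := by
    refine (hGc.integrableOn_compact (isCompact_Icc.prod isCompact_Icc)).mono_set ?_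
    exact Set.prod_mono Ioo_subset_Icc_self Ioo_subset_Icc_self
  -- polar coordinates
  have hpolar := Complex.integral_comp_polarCoord_symm fun v => g v
  -- RHS of polar formula equals the ball integral
  have hR : (∫ v, g v) = ∫ w in ball z δ, ‖F w‖ := by
    rw [hg, integral_indicator measurableSet_ball]
    have hmp : MeasurePreserving (fun v : ℂ => z + v) volume volume :=
      measurePreserving_add_left volume z
    have hemb : MeasurableEmbedding (fun v : ℂ => z + v) :=
      (Homeomorph.addLeft z).measurableEmbedding
    have := hmp.setIntegral_preimage_emb hemb (fun w => ‖F w‖) (ball z δ)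
    rw [← this]
    congr 1
    ext v
    simp [mem_ball, dist_eq_norm, add_sub_cancel_left]
  -- LHS of polar formula equals integral over the box of G
  have hL : (∫ p in Complex.polarCoord.target, p.1 • g (Complex.polarCoord.symm p))
      = ∫ p in box, G p := by
    rw [Complex.polarCoord_target]
    rw [setIntegral_eq_of_subset_of_forall_diff_eq_zero
      ((measurableSet_Ioi.prod measurableSet_Ioo))
      (Set.prod_mono Ioo_subset_Ioi_self (by rfl)) ?side]
    · refine setIntegral_congr_fun (measurableSet_Ioo.prod measurableSet_Ioo) fun q hq => ?_
      have hq1 : q.1 ∈ Ioo (0:ℝ) δ := hq.1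
      have hmem : Complex.polarCoord.symm q ∈ ball (0:ℂ) δ := by
        rw [mem_ball_zero_iff, show ‖Complex.polarCoord.symm q‖ = |q.1| from
          Complex.norm_polarCoord_symm q, _root_.abs_of_nonneg hq1.1.le]
        exact hq1.2
      rw [hg]
      simp only [Set.indicator_of_mem hmem, smul_eq_mul, hG]
    · intro q hq
      have hq1 : δ ≤ q.1 := by
        rcases hq with ⟨hqt, hqb⟩
        by_contra hlt
        push_neg at hlt
        exact hqb ⟨⟨hqt.1, hlt⟩, hqt.2⟩
      have hmem : Complex.polarCoord.symm q ∉ ball (0:ℂ) δ := by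
        rw [mem_ball_zero_iff, show ‖Complex.polarCoord.symm q‖ = |q.1| from
          Complex.norm_polarCoord_symm q, _root_.abs_of_nonneg (hδ.le.trans hq1)]
        exact not_lt.2 hq1
      have hz0 : g (Complex.polarCoord.symm q) = 0 := by
        rw [hg]; exact Set.indicator_of_notMem hmem _
      show q.1 • g (Complex.polarCoord.symm q) = 0
      rw [hz0, smul_zero]
  -- Fubini on the box
  have hGint' : Integrable G ((volume.restrict (Ioo (0:ℝ) δ)).prod
      (volume.restrict (Ioo (-Real.pi) Real.pi))) := by
    rw [Measure.prod_restrict]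
    rw [hbox, Measure.volume_eq_prod] at hGint
    exact hGint
  have hfub : ∫ p in box, G p
      = ∫ s in Ioo (0:ℝ) δ, ∫ θ in Ioo (-Real.pi) Real.pi, G (s, θ) := by
    rw [hbox, Measure.volume_eq_prod]
    rw [Measure.volume_eq_prod, hbox] at hGint
    exact setIntegral_prod G hGint
  -- inner bound via circle mean value
  have inner_bound : ∀ s ∈ Ioo (0:ℝ) δ,
      2 * Real.pi * ‖F z‖ * s ≤ ∫ θ in Ioo (-Real.pi) Real.pi, G (s, θ) := by
    intro s hs
    have hsub' : closedBall z s ⊆ unitDisk :=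
      (closedBall_subset_closedBall hs.2.le).trans hsub
    have hzc : ∀ θ : ℝ, z + Complex.polarCoord.symm (s, θ) = circleMap z s θ := by
      intro θ
      rw [Complex.polarCoord_symm_apply, circleMap, Complex.exp_mul_I]
      push_cast
      ring
    have hGeq : ∀ θ : ℝ, G (s, θ) = s * ‖F (circleMap z s θ)‖ := by
      intro θ; rw [hG]; simp only [hzc]
    have per : Function.Periodic (fun θ => ‖F (circleMap z s θ)‖) (2*Real.pi) := by
      intro θ
      simp only [periodic_circleMap z s θ]
    have hper := per.intervalIntegral_add_eq (-Real.pi) 0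
    have hbnd := circleMVP hF hs.1 hsub'
    have hIoo : ∫ θ in Ioo (-Real.pi) Real.pi, ‖F (circleMap z s θ)‖
        = ∫ θ in (0:ℝ)..(2*Real.pi), ‖F (circleMap z s θ)‖ := by
      rw [← integral_Ioc_eq_integral_Ioo,
        ← intervalIntegral.integral_of_le (by linarith [Real.pi_pos] : -Real.pi ≤ Real.pi)]
      rw [show -Real.pi + 2*Real.pi = Real.pi by ring, zero_add] at hper
      exact hper
    calc 2 * Real.pi * ‖F z‖ * s
        = s * (2 * Real.pi * ‖F z‖) := by ring
      _ ≤ s * ∫ θ in (0:ℝ)..(2*Real.pi), ‖F (circleMap z s θ)‖ := by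
          exact mul_le_mul_of_nonneg_left hbnd hs.1.le
      _ = ∫ θ in Ioo (-Real.pi) Real.pi, s * ‖F (circleMap z s θ)‖ := by
          rw [integral_const_mul, hIoo]
      _ = ∫ θ in Ioo (-Real.pi) Real.pi, G (s, θ) := by
          refine setIntegral_congr_fun measurableSet_Ioo fun θ _ => ?_
          rw [hGeq]
  -- outer estimate
  have outer_int : IntegrableOn
      (fun s => ∫ θ in Ioo (-Real.pi) Real.pi, G (s, θ)) (Ioo (0:ℝ) δ) :=
    hGint'.integral_prod_left
  have lower_int : IntegrableOn (fun s : ℝ => 2 * Real.pi * ‖F z‖ * s) (Ioo (0:ℝ) δ) := by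
    have hc : Continuous fun s : ℝ => 2 * Real.pi * ‖F z‖ * s := by fun_prop
    exact (hc.continuousOn.integrableOn_compact isCompact_Icc).mono_set Ioo_subset_Icc_self
  have outer : ∫ s in Ioo (0:ℝ) δ, 2 * Real.pi * ‖F z‖ * s
      ≤ ∫ s in Ioo (0:ℝ) δ, ∫ θ in Ioo (-Real.pi) Real.pi, G (s, θ) :=
    setIntegral_mono_on lower_int outer_int measurableSet_Ioo inner_bound
  have lower_val : ∫ s in Ioo (0:ℝ) δ, 2 * Real.pi * ‖F z‖ * s
      = Real.pi * δ^2 * ‖F z‖ := by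
    have : ∫ s in Ioo (0:ℝ) δ, 2 * Real.pi * ‖F z‖ * s
        = 2 * Real.pi * ‖F z‖ * ∫ s in Ioo (0:ℝ) δ, s := integral_const_mul _ _
    rw [this, ← integral_Ioc_eq_integral_Ioo, ← intervalIntegral.integral_of_le hδ.le,
      integral_id]
    ring
  calc Real.pi * δ^2 * ‖F z‖
      = ∫ s in Ioo (0:ℝ) δ, 2 * Real.pi * ‖F z‖ * s := lower_val.symm
    _ ≤ ∫ s in Ioo (0:ℝ) δ, ∫ θ in Ioo (-Real.pi) Real.pi, G (s, θ) := outer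
    _ = ∫ p in box, G p := hfub.symm
    _ = ∫ p in Complex.polarCoord.target, p.1 • g (Complex.polarCoord.symm p) := hL.symm
    _ = ∫ v, g v := hpolar
    _ = ∫ w in ball z δ, ‖F w‖ := hR

lemma tail_small (Φ : ℂ → ℝ)
    (hfin : ∫⁻ w in unitDisk, ENNReal.ofReal (Φ w) < ⊤) {c : ℝ≥0∞} (hc : 0 < c) :
    ∃ r : ℝ, 0 ≤ r ∧ r < 1 ∧
      ∫⁻ w in {w : ℂ | w ∈ unitDisk ∧ r < ‖w‖}, ENNReal.ofReal (Φ w) < c := by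
  set μ := volume.withDensity fun w => ENNReal.ofReal (Φ w) with hμ
  set S : ℕ → Set ℂ := fun n => {w : ℂ | w ∈ unitDisk ∧ 1 - 1/(n+1) < ‖w‖} with hS
  have hSm : ∀ n, MeasurableSet (S n) := by
    intro n
    have : S n = unitDisk ∩ {w : ℂ | 1 - 1/(n+1:ℝ) < ‖w‖} := rfl
    rw [this]
    exact measurableSet_ball.inter (isOpen_lt continuous_const continuous_norm).measurableSet
  have hμeq : ∀ (s : Set ℂ), MeasurableSet s →
      μ s = ∫⁻ w in s, ENNReal.ofReal (Φ w) := fun s hs => withDensity_apply _ hs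
  have hanti : Antitone S := by
    intro n m hnm w hw
    refine ⟨hw.1, lt_of_le_of_lt ?_ hw.2⟩
    have h1 : (1:ℝ)/(m+1) ≤ 1/(n+1) := by
      apply one_div_le_one_div_of_le
      · positivity
      · have hc2 : (n:ℝ) ≤ m := Nat.cast_le.mpr hnm
        push_cast
        linarith
    linarith
  have hsub0 : ∀ n, S n ⊆ unitDisk := fun n w hw => hw.1
  have hfin0 : μ (S 0) ≠ ⊤ := by
    rw [hμeq _ (hSm 0)]
    exact (lt_of_le_of_lt (lintegral_mono_set (hsub0 0)) hfin).ne
  have hiInter : ⋂ n, S n = ∅ := by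
    ext w
    simp only [mem_iInter, mem_empty_iff_false, iff_false]
    intro hall
    have hw1 : ‖w‖ < 1 := mem_ball_zero_iff.mp (hall 0).1
    obtain ⟨n, hn⟩ := exists_nat_one_div_lt (by linarith : (0:ℝ) < 1 - ‖w‖)
    have := (hall n).2
    linarith
  have htend := tendsto_measure_iInter_atTop (μ := μ)
    (fun n => (hSm n).nullMeasurableSet) hanti ⟨0, hfin0⟩
  rw [hiInter, measure_empty] at htend
  obtain ⟨n, hn⟩ := (htend.eventually_lt_const hc).exists
  refine ⟨1 - 1/(n+1), ?_, ?_, ?_⟩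
  · have h1 : (1:ℝ)/(n+1) ≤ 1 := by
      rw [div_le_one (by positivity)]
      push_cast
      linarith [Nat.cast_nonneg (α := ℝ) n]
    linarith
  · have h1 : (0:ℝ) < 1/(n+1) := by positivity
    linarith
  · rw [← hμeq _ (hSm n)]
    exact hn

lemma key_estimate (p : ℝ) (hp : 1 < p) {H : ℂ → ℂ} (hH : DifferentiableOn ℂ H unitDisk)
    {z : ℂ} (hz1 : ‖z‖ < 1) {t : ℝ≥0∞} (htfin : t ≠ ⊤)
    (ht : ∫⁻ w in ball z ((1 - ‖z‖)/2), ENNReal.ofReal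
      (‖H w‖ ^ p * (1 - ‖w‖^2) ^ (p/2 + (p-2))) ≤ t) :
    (1 - ‖z‖^2) ^ ((3:ℝ)/2) * ‖H z‖ ≤
      (4:ℝ) ^ ((3:ℝ)/2) * ((max 1 ((6:ℝ) ^ (-(p/2 + (p-2)))) / Real.pi) ^ (1/p))
        * t.toReal ^ (1/p) := by
  set α := p/2 + (p-2) with hα
  set K := max 1 ((6:ℝ) ^ (-α)) with hK
  set δ := (1 - ‖z‖)/2 with hδdef
  set q := Real.conjExponent p with hq
  have hpq : p.HolderConjugate q := Real.HolderConjugate.conjExponent hp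
  have hp0 : 0 < p := by linarith
  have hδ : 0 < δ := by rw [hδdef]; linarith
  have hKpos : (0:ℝ) < K := lt_of_lt_of_le one_pos (le_max_left _ _)
  have hπ : (0:ℝ) < Real.pi := Real.pi_pos
  have hm : (0:ℝ) ≤ ‖H z‖ := norm_nonneg _
  have hsub : closedBall z δ ⊆ unitDisk := by
    intro w hw
    rw [mem_closedBall, dist_eq_norm] at hw
    rw [unitDisk, mem_ball_zero_iff]
    calc ‖w‖ = ‖z + (w - z)‖ := by ring_nf
      _ ≤ ‖z‖ + ‖w - z‖ := norm_add_le _ _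
      _ ≤ ‖z‖ + δ := by linarith
      _ < 1 := by rw [hδdef]; linarith
  -- mean value property
  have step1 : Real.pi * δ^2 * ‖H z‖ ≤ ∫ w in ball z δ, ‖H w‖ := ballMVP hH hδ hsub
  -- integrability and measurability
  have hHcb : ContinuousOn (fun w => ‖H w‖) (closedBall z δ) :=
    (hH.continuousOn.mono hsub).norm
  have hInt : IntegrableOn (fun w => ‖H w‖) (ball z δ) :=
    (hHcb.integrableOn_compact (isCompact_closedBall _ _)).mono_set ball_subset_closedBall
  have hmeas : AEMeasurable (fun w => ENNReal.ofReal ‖H w‖)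
      (volume.restrict (ball z δ)) :=
    ((hHcb.mono ball_subset_closedBall).aemeasurable measurableSet_ball).ennreal_ofReal
  -- pointwise weight bound on the ball
  have hpt : ∀ w ∈ ball z δ, ‖H w‖ ^ p ≤ (K * δ ^ (-α)) * (‖H w‖ ^ p * (1 - ‖w‖^2) ^ α) := by
    intro w hw
    rw [mem_ball, dist_eq_norm] at hw
    have habs : |‖w‖ - ‖z‖| ≤ ‖w - z‖ := abs_norm_sub_norm_le w z
    have h1 : ‖z‖ - δ < ‖w‖ ∧ ‖w‖ < ‖z‖ + δ := by
      constructor <;> [skip; skip] <;> cases' abs_le.mp habs with ha hb <;> linarith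
    have hw0 : (0:ℝ) ≤ ‖w‖ := norm_nonneg _
    set u := 1 - ‖w‖^2 with hu
    have hul : δ ≤ u := by
      have : 1 - ‖w‖ ≥ δ := by rw [hδdef]; nlinarith [h1.2]
      nlinarith
    have hur : u ≤ 6 * δ := by
      have h2 : 1 - ‖w‖ ≤ 3 * δ := by rw [hδdef]; nlinarith [h1.1]
      have h3 : 1 + ‖w‖ ≤ 2 := by nlinarith [hul, hδ]
      nlinarith [hw0, hδ]
    have hupos : 0 < u := lt_of_lt_of_le hδ hul
    have hclaim : u ^ (-α) ≤ K * δ ^ (-α) := by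
      rcases le_or_gt 0 (-α) with hnn | hneg
      · calc u ^ (-α) ≤ (6 * δ) ^ (-α) := Real.rpow_le_rpow hupos.le hur hnn
          _ = 6 ^ (-α) * δ ^ (-α) := Real.mul_rpow (by norm_num) hδ.le
          _ ≤ K * δ ^ (-α) := by
              apply mul_le_mul_of_nonneg_right (le_max_right _ _)
              exact Real.rpow_nonneg hδ.le _
      · calc u ^ (-α) ≤ δ ^ (-α) := Real.rpow_le_rpow_of_nonpos hδ hul hneg.le
          _ ≤ K * δ ^ (-α) := le_mul_of_one_le_left (Real.rpow_nonneg hδ.le _)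
              (le_max_left _ _)
    have hone : 1 ≤ (K * δ ^ (-α)) * u ^ α := by
      have h4 : u ^ (-α) * u ^ α = 1 := by
        rw [← Real.rpow_add hupos]; simp
      calc (1:ℝ) = u ^ (-α) * u ^ α := h4.symm
        _ ≤ (K * δ ^ (-α)) * u ^ α :=
            mul_le_mul_of_nonneg_right hclaim (Real.rpow_nonneg hupos.le _)
    calc ‖H w‖ ^ p = ‖H w‖ ^ p * 1 := (mul_one _).symm
      _ ≤ ‖H w‖ ^ p * ((K * δ ^ (-α)) * u ^ α) :=
          mul_le_mul_of_nonneg_left hone (Real.rpow_nonneg (norm_nonneg _) _)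
      _ = (K * δ ^ (-α)) * (‖H w‖ ^ p * u ^ α) := by ring
  -- Hoelder inequality on the ball
  have hold := ENNReal.lintegral_mul_le_Lp_mul_Lq (volume.restrict (ball z δ)) hpq
    hmeas (aemeasurable_const (b := (1:ℝ≥0∞)))
  simp only [Pi.mul_apply, mul_one, ENNReal.one_rpow, lintegral_const, one_mul,
    Measure.restrict_apply_univ] at hold
  rw [Complex.volume_ball] at hold
  -- bound the p-th moment
  have hApt : ∫⁻ w in ball z δ, (ENNReal.ofReal ‖H w‖) ^ p
      ≤ ENNReal.ofReal (K * δ ^ (-α)) * t := by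
    have h1 : ∫⁻ w in ball z δ, (ENNReal.ofReal ‖H w‖) ^ p
        ≤ ∫⁻ w in ball z δ, ENNReal.ofReal (K * δ ^ (-α)) *
            ENNReal.ofReal (‖H w‖ ^ p * (1 - ‖w‖^2) ^ α) := by
      refine setLIntegral_mono' measurableSet_ball fun w hw => ?_
      rw [ENNReal.ofReal_rpow_of_nonneg (norm_nonneg _) hp0.le,
        ← ENNReal.ofReal_mul (by positivity)]
      exact ENNReal.ofReal_le_ofReal (hpt w hw)
    have h2 : ∫⁻ w in ball z δ, ENNReal.ofReal (K * δ ^ (-α)) *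
        ENNReal.ofReal (‖H w‖ ^ p * (1 - ‖w‖^2) ^ α)
        = ENNReal.ofReal (K * δ ^ (-α)) *
          ∫⁻ w in ball z δ, ENNReal.ofReal (‖H w‖ ^ p * (1 - ‖w‖^2) ^ α) :=
      lintegral_const_mul' _ _ ENNReal.ofReal_ne_top
    calc ∫⁻ w in ball z δ, (ENNReal.ofReal ‖H w‖) ^ p
        ≤ ENNReal.ofReal (K * δ ^ (-α)) *
          ∫⁻ w in ball z δ, ENNReal.ofReal (‖H w‖ ^ p * (1 - ‖w‖^2) ^ α) := h1.trans h2.le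
      _ ≤ ENNReal.ofReal (K * δ ^ (-α)) * t := mul_le_mul_right ht _
  -- assemble in ℝ≥0∞
  have hchain : ENNReal.ofReal (Real.pi * δ^2 * ‖H z‖)
      ≤ (ENNReal.ofReal (K * δ ^ (-α)) * t) ^ (1/p) *
        (ENNReal.ofReal δ ^ 2 * (NNReal.pi : ℝ≥0∞)) ^ (1/q) := by
    calc ENNReal.ofReal (Real.pi * δ^2 * ‖H z‖)
        ≤ ENNReal.ofReal (∫ w in ball z δ, ‖H w‖) := ENNReal.ofReal_le_ofReal step1
      _ = ∫⁻ w in ball z δ, ENNReal.ofReal ‖H w‖ :=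
          ofReal_integral_eq_lintegral_ofReal hInt
            (Filter.Eventually.of_forall fun w => norm_nonneg _)
      _ ≤ (∫⁻ w in ball z δ, (ENNReal.ofReal ‖H w‖) ^ p) ^ (1/p) *
          (ENNReal.ofReal δ ^ 2 * (NNReal.pi : ℝ≥0∞)) ^ (1/q) := hold
      _ ≤ (ENNReal.ofReal (K * δ ^ (-α)) * t) ^ (1/p) *
          (ENNReal.ofReal δ ^ 2 * (NNReal.pi : ℝ≥0∞)) ^ (1/q) := by
          exact mul_le_mul_left (ENNReal.rpow_le_rpow hApt (by positivity)) _
  -- pass to real numbers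
  set t' := t.toReal with ht'
  have ht'0 : 0 ≤ t' := ENNReal.toReal_nonneg
  have hreal : Real.pi * δ^2 * ‖H z‖
      ≤ (K * δ ^ (-α) * t') ^ (1/p) * (δ^2 * Real.pi) ^ (1/q) := by
    have hne : (ENNReal.ofReal (K * δ ^ (-α)) * t) ^ (1/p) *
        (ENNReal.ofReal δ ^ 2 * (NNReal.pi : ℝ≥0∞)) ^ (1/q) ≠ ⊤ := by
      apply ENNReal.mul_ne_top
      · exact ENNReal.rpow_ne_top_of_nonneg (by positivity)
          (ENNReal.mul_ne_top ENNReal.ofReal_ne_top htfin)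
      · have hq0 : 0 < q := hpq.symm.pos
        exact ENNReal.rpow_ne_top_of_nonneg (by positivity)
          (ENNReal.mul_ne_top (by simp [ENNReal.pow_ne_top ENNReal.ofReal_ne_top])
            ENNReal.coe_ne_top)
    have := ENNReal.toReal_mono hne hchain
    rw [ENNReal.toReal_ofReal (by positivity)] at this
    refine this.trans_eq ?_
    rw [ENNReal.toReal_mul, ← ENNReal.toReal_rpow, ← ENNReal.toReal_rpow,
      ENNReal.toReal_mul, ENNReal.toReal_ofReal (by positivity),
      ENNReal.toReal_mul, ENNReal.toReal_pow, ENNReal.toReal_ofReal hδ.le,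
      ENNReal.coe_toReal, NNReal.coe_real_pi]
  -- final real computation
  have hq0 : 0 < q := hpq.symm.pos
  have hq1 : 1/q = 1 - 1/p := by
    have h := hpq.inv_add_inv_eq_one
    rw [inv_eq_one_div, inv_eq_one_div] at h
    linarith
  have hδ2 : (δ:ℝ)^2 = δ ^ ((2:ℝ)) := by
    rw [← Real.rpow_natCast δ 2]; norm_num
  have hδpow : δ ^ ((3:ℝ)/2) * δ ^ (-α * (1/p)) * δ ^ ((2:ℝ) * (1/q)) = δ ^ ((2:ℝ)) := by
    rw [← Real.rpow_add hδ, ← Real.rpow_add hδ]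
    congr 1
    rw [hq1, hα]
    field_simp
    ring
  have hπpow : Real.pi ^ (1/q) = Real.pi * (Real.pi ^ (1/p))⁻¹ := by
    rw [hq1, show (1:ℝ) - 1/p = 1 + (-(1/p)) by ring, Real.rpow_add hπ, Real.rpow_one,
      Real.rpow_neg hπ.le]
  have hKdiv : (K/Real.pi) ^ (1/p) = K^(1/p) * (Real.pi ^ (1/p))⁻¹ := by
    rw [Real.div_rpow hKpos.le hπ.le, div_eq_mul_inv]
  have key : (4*δ) ^ ((3:ℝ)/2) * ((K * δ^(-α) * t') ^ (1/p) * (δ^2*Real.pi) ^ (1/q))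
      = (Real.pi * δ^2) * ((4:ℝ) ^ ((3:ℝ)/2) * ((K/Real.pi) ^ (1/p)) * t' ^ (1/p)) := by
    rw [Real.mul_rpow (by norm_num) hδ.le,
      Real.mul_rpow (mul_nonneg hKpos.le (Real.rpow_nonneg hδ.le _)) ht'0,
      Real.mul_rpow hKpos.le (Real.rpow_nonneg hδ.le _)]
    rw [hδ2, Real.mul_rpow (Real.rpow_nonneg hδ.le _) hπ.le,
      ← Real.rpow_mul hδ.le, ← Real.rpow_mul hδ.le, hπpow, hKdiv]
    rw [← hδpow]
    ring
  have h43 : (0:ℝ) ≤ (4*δ) ^ ((3:ℝ)/2) := Real.rpow_nonneg (by linarith) _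
  have hu0pos : (0:ℝ) < 1 - ‖z‖^2 := by nlinarith [norm_nonneg z]
  have hu04 : 1 - ‖z‖^2 ≤ 4*δ := by rw [hδdef]; nlinarith [norm_nonneg z]
  have hmono : (1 - ‖z‖^2) ^ ((3:ℝ)/2) ≤ (4*δ) ^ ((3:ℝ)/2) :=
    Real.rpow_le_rpow hu0pos.le hu04 (by norm_num)
  have hπδ : (0:ℝ) < Real.pi * δ^2 := by positivity
  have hbig : ((1 - ‖z‖^2) ^ ((3:ℝ)/2) * ‖H z‖) * (Real.pi * δ^2)
      ≤ ((4:ℝ) ^ ((3:ℝ)/2) * ((K/Real.pi) ^ (1/p)) * t' ^ (1/p)) * (Real.pi * δ^2) := by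
    calc ((1 - ‖z‖^2) ^ ((3:ℝ)/2) * ‖H z‖) * (Real.pi * δ^2)
        ≤ ((4*δ) ^ ((3:ℝ)/2) * ‖H z‖) * (Real.pi * δ^2) := by
          apply mul_le_mul_of_nonneg_right _ hπδ.le
          exact mul_le_mul_of_nonneg_right hmono hm
      _ = (4*δ) ^ ((3:ℝ)/2) * (Real.pi * δ^2 * ‖H z‖) := by ring
      _ ≤ (4*δ) ^ ((3:ℝ)/2) * ((K * δ^(-α) * t') ^ (1/p) * (δ^2*Real.pi) ^ (1/q)) :=
          mul_le_mul_of_nonneg_left hreal h43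
      _ = ((4:ℝ) ^ ((3:ℝ)/2) * ((K/Real.pi) ^ (1/p)) * t' ^ (1/p)) * (Real.pi * δ^2) := by
          rw [key]; ring
  exact le_of_mul_le_mul_right hbig hπδ

/-- If `f = h + conj g` is sense-preserving harmonic with dilatation
`w(z) = z` and `f ∈ 𝔅𝒯_p` for some `p > 1`, then `f ∈ 𝔅𝒯₀`, i.e.
`(1-|z|²)√(J_f(z)) → 0` as `|z| → 1⁻`. -/
theorem besovType_implies_littleBlochType_for_identity_dilatation
    (p : ℝ) (hp : 1 < p) (h g : ℂ → ℂ) (hsp : SensePreserving h g)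
    (hgd : ∀ z ∈ unitDisk, deriv g z = z * deriv h z)
    (hBp : ∫⁻ z in unitDisk, ENNReal.ofReal
        ((‖deriv h z‖ ^ 2 - ‖deriv g z‖ ^ 2) ^ (p / 2) * (1 - ‖z‖ ^ 2) ^ (p - 2)) < ⊤) :
    ∀ ε : ℝ, 0 < ε → ∃ r : ℝ, 0 ≤ r ∧ r < 1 ∧ ∀ z ∈ unitDisk, r < ‖z‖ →
      (1 - ‖z‖ ^ 2) * Real.sqrt (‖deriv h z‖ ^ 2 - ‖deriv g z‖ ^ 2) < ε := by
  
  intro ε hε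
  have hp0 : (0:ℝ) < p := by linarith
  have hOpen : IsOpen unitDisk := isOpen_ball
  have hHd : DifferentiableOn ℂ (deriv h) unitDisk :=
    ((hsp.1.analyticOnNhd hOpen).deriv).differentiableOn
  -- pointwise identity of the integrands on the disk
  have hcongr : ∀ w ∈ unitDisk,
      ENNReal.ofReal ((‖deriv h w‖ ^ 2 - ‖deriv g w‖ ^ 2) ^ (p / 2) * (1 - ‖w‖ ^ 2) ^ (p - 2))
        = ENNReal.ofReal (‖deriv h w‖ ^ p * (1 - ‖w‖ ^ 2) ^ (p/2 + (p-2))) := by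
    intro w hw
    have hw1 : ‖w‖ < 1 := mem_ball_zero_iff.mp hw
    have hu : (0:ℝ) < 1 - ‖w‖ ^ 2 := by nlinarith [norm_nonneg w]
    congr 1
    have hgw : ‖deriv g w‖ = ‖w‖ * ‖deriv h w‖ := by rw [hgd w hw, norm_mul]
    have h1 : ‖deriv h w‖ ^ 2 - ‖deriv g w‖ ^ 2 = ‖deriv h w‖ ^ 2 * (1 - ‖w‖ ^ 2) := by
      rw [hgw]; ring
    rw [h1, Real.mul_rpow (sq_nonneg _) hu.le]
    rw [← Real.rpow_natCast ‖deriv h w‖ 2, ← Real.rpow_mul (norm_nonneg _)]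
    rw [mul_assoc, ← Real.rpow_add hu]
    rw [show ((2:ℕ):ℝ) * (p/2) = p by push_cast; ring]
  have hfin : ∫⁻ w in unitDisk, ENNReal.ofReal
      (‖deriv h w‖ ^ p * (1 - ‖w‖ ^ 2) ^ (p/2 + (p-2))) < ⊤ := by
    rw [← setLIntegral_congr_fun hOpen.measurableSet
      hcongr]
    exact hBp
  set K := max 1 ((6:ℝ) ^ (-(p/2 + (p-2)))) with hK
  have hKpos : (0:ℝ) < K := lt_of_lt_of_le one_pos (le_max_left _ _)
  set C := (4:ℝ) ^ ((3:ℝ)/2) * ((K / Real.pi) ^ (1/p)) with hC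
  have hπ : (0:ℝ) < Real.pi := Real.pi_pos
  have hCpos : 0 < C := by rw [hC]; positivity
  have hcpos : (0:ℝ≥0∞) < ENNReal.ofReal ((ε/C) ^ p) := by
    rw [ENNReal.ofReal_pos]
    have : 0 < ε / C := div_pos hε hCpos
    positivity
  obtain ⟨r₀, hr₀0, hr₀1, hr₀⟩ := tail_small
    (fun w => ‖deriv h w‖ ^ p * (1 - ‖w‖ ^ 2) ^ (p/2 + (p-2))) hfin hcpos
  refine ⟨max 0 ((2*r₀+1)/3), le_max_left _ _, ?_, ?_⟩
  · apply max_lt one_pos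
    linarith
  intro z hz hrz
  have hz1 : ‖z‖ < 1 := mem_ball_zero_iff.mp hz
  have hz3 : (2*r₀+1)/3 < ‖z‖ := lt_of_le_of_lt (le_max_right _ _) hrz
  set t := ∫⁻ w in {w : ℂ | w ∈ unitDisk ∧ r₀ < ‖w‖},
    ENNReal.ofReal (‖deriv h w‖ ^ p * (1 - ‖w‖ ^ 2) ^ (p/2 + (p-2))) with hTdef
  have htfin : t ≠ ⊤ := hr₀.ne_top
  have hball : ∫⁻ w in ball z ((1 - ‖z‖)/2), ENNReal.ofReal
      (‖deriv h w‖ ^ p * (1 - ‖w‖ ^ 2) ^ (p/2 + (p-2))) ≤ t := by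
    apply lintegral_mono_set
    intro w hw
    rw [mem_ball, dist_eq_norm] at hw
    have htri : ‖w‖ ≤ ‖w - z‖ + ‖z‖ := by
      calc ‖w‖ = ‖(w - z) + z‖ := by ring_nf
        _ ≤ ‖w - z‖ + ‖z‖ := norm_add_le _ _
    have habs : |‖w‖ - ‖z‖| ≤ ‖w - z‖ := abs_norm_sub_norm_le w z
    have hlow := (abs_le.mp habs).1
    constructor
    · rw [unitDisk, mem_ball_zero_iff]; linarith
    · show r₀ < ‖w‖
      linarith
  have hkey := key_estimate p hp hHd hz1 htfin hball
  -- rewrite the goal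
  have hu : (0:ℝ) < 1 - ‖z‖ ^ 2 := by nlinarith [norm_nonneg z]
  have hgz : ‖deriv g z‖ = ‖z‖ * ‖deriv h z‖ := by rw [hgd z hz, norm_mul]
  have h1 : ‖deriv h z‖ ^ 2 - ‖deriv g z‖ ^ 2 = ‖deriv h z‖ ^ 2 * (1 - ‖z‖ ^ 2) := by
    rw [hgz]; ring
  rw [h1, Real.sqrt_mul (sq_nonneg _), Real.sqrt_sq (norm_nonneg _)]
  have h2 : (1 - ‖z‖ ^ 2) * (‖deriv h z‖ * Real.sqrt (1 - ‖z‖ ^ 2))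
      = (1 - ‖z‖ ^ 2) ^ ((3:ℝ)/2) * ‖deriv h z‖ := by
    rw [Real.sqrt_eq_rpow, show ((3:ℝ)/2) = 1 + 1/2 by norm_num, Real.rpow_add hu,
      Real.rpow_one]
    ring
  rw [h2]
  have ht' : t.toReal < (ε/C) ^ p := by
    have := (ENNReal.toReal_lt_toReal htfin ENNReal.ofReal_ne_top).mpr hr₀
    rwa [ENNReal.toReal_ofReal (by positivity)] at this
  calc (1 - ‖z‖ ^ 2) ^ ((3:ℝ)/2) * ‖deriv h z‖
      ≤ C * t.toReal ^ (1/p) := hkey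
    _ < C * ((ε/C) ^ p) ^ (1/p) := by
        apply mul_lt_mul_of_pos_left _ hCpos
        exact Real.rpow_lt_rpow ENNReal.toReal_nonneg ht' (by positivity)
    _ = ε := by
        rw [← Real.rpow_mul (div_nonneg hε.le hCpos.le), mul_one_div, div_self hp0.ne',
          Real.rpow_one]
        field_simp
end
end
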